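/- arXiv:0810.1206 — 7 statements merged into one kernel-verified Lean document; each statement's English description precedes it below -/
import Mathlib

section
/- Let q ∈ [1,∞) and p ∈ [1,∞], let B be an open, relatively compact, symmetric neighbourhood of e, and let f ∈ (L^q,L^p)(G). Then for every x ∈ G the convolution value (|f|^q ∗ χ_B)(x) = ∫_G |f(y)|^q χ_B(y⁻¹x) dλ(y) is finite. -/
open MeasureTheory ENNReal NNReal Set Filter Topology Pointwise

variable {G : Type*} [Group G] [TopologicalSpace G] [IsTopologicalGroup G]
  [T2Space G] [LocallyCompactSpace G] [SigmaCompactSpace G]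
  [MeasurableSpace G] [BorelSpace G]

/-- The norm `_B‖f‖_{q,p}`. -/
noncomputable def blockNorm {E : Type*} [NormedAddCommGroup E]
    (μ : Measure G) (q p : ℝ≥0∞) (B : Set G) (f : G → E) : ℝ≥0∞ :=
  if p = ∞ then essSup (fun y => eLpNorm ((y • B).indicator f) q μ) μ
  else (∫⁻ y, eLpNorm ((y • B).indicator f) q μ ^ p.toReal ∂μ) ^ (1 / p.toReal)

/-- The norm `‖f‖^π_{q,p}` associated to a partition `π`. -/
noncomputable def partNorm {E : Type*} [NormedAddCommGroup E]
    (μ : Measure G) (q p : ℝ≥0∞) (π : Set (Set G)) (f : G → E) : ℝ≥0∞ :=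
  if p = ∞ then ⨆ A ∈ π, eLpNorm (A.indicator f) q μ
  else (∑' A : π, eLpNorm ((A : Set G).indicator f) q μ ^ p.toReal) ^ (1 / p.toReal)

/-- `π` is a `U`–`V` uniform partition of `G`. -/
def IsUniformPartition (π : Set (Set G)) (U V : Set G) : Prop :=
  π.Countable ∧ (∀ A ∈ π, MeasurableSet A) ∧ π.PairwiseDisjoint id ∧
    ⋃₀ π = univ ∧ ∀ A ∈ π, ∃ x ∈ A, x • U ⊆ A ∧ A ⊆ x • V

/-- The ball `B(x,r)` for the homogeneous norm `nm`. -/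
def gball (nm : G → ℝ) (x : G) (r : ℝ) : Set G := {y | nm (x⁻¹ * y) < r}

/-- The norm `‖f‖_{q,p,α}`. -/
noncomputable def alphaNorm {E : Type*} [NormedAddCommGroup E]
    (μ : Measure G) (nm : G → ℝ) (πr : ℝ → Set (Set G))
    (q p α : ℝ≥0∞) (f : G → E) : ℝ≥0∞ :=
  ⨆ (r : ℝ) (_ : 0 < r),
    μ (gball nm 1 r) ^ (α⁻¹.toReal - q⁻¹.toReal) * partNorm μ q p (πr r) f

/-- The decreasing rearrangement `f*`. -/
noncomputable def rearr (μ : Measure G) (f : G → ℂ) (t : ℝ≥0∞) : ℝ≥0∞ :=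
  sInf {s : ℝ≥0∞ | 0 < s ∧ μ {x | s < (‖f x‖₊ : ℝ≥0∞)} ≤ t}

/-- The weak Lorentz quasinorm `‖f‖*_{α,∞}`. -/
noncomputable def weakNorm (μ : Measure G) (α : ℝ≥0∞) (f : G → ℂ) : ℝ≥0∞ :=
  ⨆ (t : ℝ≥0∞) (_ : 0 < t) (_ : t ≠ ∞), t ^ α⁻¹.toReal * rearr μ f t

theorem statement0
    (μ : Measure G) [μ.IsHaarMeasure]
    (q p : ℝ≥0∞) (hq1 : 1 ≤ q) (hq : q ≠ ∞) (hp1 : 1 ≤ p)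
    (B : Set G) (hBopen : IsOpen B) (hBmem : (1 : G) ∈ B)
    (hBcpt : IsCompact (closure B)) (hBsymm : B⁻¹ = B)
    (f : G → ℂ) (hf : AEStronglyMeasurable f μ)
    (hfin : blockNorm μ q p B f < ∞) :
    ∀ x : G,
      (∫⁻ y, (‖f y‖₊ : ℝ≥0∞) ^ q.toReal * B.indicator (fun _ => (1 : ℝ≥0∞)) (y⁻¹ * x) ∂μ) < ∞ := by
  
  intro x
  have hq0 : q ≠ 0 := fun h => by simp [h] at hq1
  have hqt : 0 < q.toReal := ENNReal.toReal_pos hq0 hq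
  set g : G → ℝ≥0∞ := fun y => (‖f y‖₊ : ℝ≥0∞) ^ q.toReal with hg
  -- key: eLpNorm of indicator vs set lintegral
  have hind : ∀ s : Set G, MeasurableSet s →
      (eLpNorm (s.indicator f) q μ < ∞ ↔ ∫⁻ y in s, g y ∂μ < ∞) := by
    intro s hs
    rw [eLpNorm_lt_top_iff_lintegral_rpow_enorm_lt_top hq0 hq]
    simp only [enorm_eq_nnnorm]
    have : ∀ y, (‖s.indicator f y‖₊ : ℝ≥0∞) ^ q.toReal = s.indicator g y := by
      intro y
      by_cases hy : y ∈ s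
      · simp [Set.indicator_of_mem hy, hg]
      · simp [Set.indicator_of_notMem hy, ENNReal.zero_rpow_of_pos hqt]
    simp_rw [this]
    rw [lintegral_indicator hs]
  -- the good set
  set S : Set G := {y | eLpNorm ((y • B).indicator f) q μ < ∞} with hS
  -- every z is in y • B for some good y
  have hcov : ∀ z : G, ∃ y ∈ S, z ∈ y • B := by
    intro z
    have hzB : IsOpen (z • B) := hBopen.smul z
    have hzpos : 0 < μ (z • B) := hzB.measure_pos μ ⟨z, by
      exact ⟨1, hBmem, mul_one z⟩⟩
    have hmem : ∀ y ∈ z • B, z ∈ y • B := by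
      rintro y ⟨b, hb, rfl⟩
      refine ⟨b⁻¹, ?_, by simp [smul_eq_mul, mul_assoc]⟩
      rw [← hBsymm]; exact Set.inv_mem_inv.2 hb
    by_cases hp : p = ∞
    · have hM : blockNorm μ q p B f =
          essSup (fun y => eLpNorm ((y • B).indicator f) q μ) μ := by
        rw [blockNorm, if_pos hp]
      have hae : ∀ᵐ y ∂μ, eLpNorm ((y • B).indicator f) q μ ≤ blockNorm μ q p B f := by
        rw [hM]; exact ENNReal.ae_le_essSup _
      have : ¬ μ {y | ¬ eLpNorm ((y • B).indicator f) q μ ≤ blockNorm μ q p B f} > 0 := by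
        simpa [ae_iff] using hae
      by_contra hcon
      push_neg at hcon
      have hsub : z • B ⊆ {y | ¬ eLpNorm ((y • B).indicator f) q μ ≤ blockNorm μ q p B f} := by
        intro y hy
        intro hle
        exact hcon y (lt_of_le_of_lt hle hfin) (hmem y hy)
      exact this (lt_of_lt_of_le hzpos (measure_mono hsub))
    · have hpt : 0 < p.toReal := ENNReal.toReal_pos (fun h => by simp [h] at hp1) hp
      have hI : ∫⁻ y, eLpNorm ((y • B).indicator f) q μ ^ p.toReal ∂μ < ∞ := by
        by_contra hcon
        push_neg at hcon
        have : blockNorm μ q p B f = ∞ := by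
          rw [blockNorm, if_neg hp, top_le_iff.1 hcon,
            ENNReal.top_rpow_of_pos (by positivity)]
        exact absurd this hfin.ne
      by_contra hcon
      push_neg at hcon
      have hsub : ∀ y ∈ z • B,
          eLpNorm ((y • B).indicator f) q μ ^ p.toReal = ∞ := by
        intro y hy
        have : ¬ eLpNorm ((y • B).indicator f) q μ < ∞ :=
          fun h => hcon y h (hmem y hy)
        rw [not_lt, top_le_iff] at this
        rw [this, ENNReal.top_rpow_of_pos hpt]
      have hge : ∫⁻ y, (z • B).indicator (fun _ => (∞ : ℝ≥0∞)) y ∂μ ≤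
          ∫⁻ y, eLpNorm ((y • B).indicator f) q μ ^ p.toReal ∂μ := by
        refine lintegral_mono fun y => ?_
        by_cases hy : y ∈ z • B
        · rw [Set.indicator_of_mem hy, hsub y hy]
        · simp [Set.indicator_of_notMem hy]
      rw [lintegral_indicator hzB.measurableSet, setLIntegral_const,
        ENNReal.top_mul hzpos.ne'] at hge
      exact absurd (lt_of_le_of_lt hge hI) (lt_irrefl _)
  -- finite subcover of x • closure B
  have hKsub : x • closure B ⊆ ⋃ y : S, (y : G) • B := by
    intro z _
    obtain ⟨y, hy, hz⟩ := hcov z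
    exact Set.mem_iUnion.2 ⟨⟨y, hy⟩, hz⟩
  obtain ⟨t, ht⟩ := (hBcpt.smul x).elim_finite_subcover (fun y : S => (y : G) • B)
    (fun y => hBopen.smul _) hKsub
  have hxB : x • B ⊆ ⋃ i ∈ t, (i : G) • B :=
    (Set.smul_set_mono subset_closure).trans ht
  -- rewrite integrand as indicator over x • B
  have heq : ∀ y : G, g y * B.indicator (fun _ => (1 : ℝ≥0∞)) (y⁻¹ * x)
      = (x • B).indicator g y := by
    intro y
    by_cases hy : y ∈ x • B
    · obtain ⟨b, hb, rfl⟩ := hy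
      have h1 : (x • b)⁻¹ * x = b⁻¹ := by simp [smul_eq_mul]
      have hb' : b⁻¹ ∈ B := by rw [← hBsymm]; exact Set.inv_mem_inv.2 hb
      rw [h1, Set.indicator_of_mem hb', Set.indicator_of_mem (Set.smul_mem_smul_set hb),
        mul_one]
    · have h2 : y⁻¹ * x ∉ B := by
        intro hc
        refine hy ⟨(y⁻¹ * x)⁻¹, by rw [← hBsymm]; exact Set.inv_mem_inv.2 hc, ?_⟩
        simp [smul_eq_mul]
      rw [Set.indicator_of_notMem h2, Set.indicator_of_notMem hy, mul_zero]
  calc ∫⁻ y, g y * B.indicator (fun _ => (1 : ℝ≥0∞)) (y⁻¹ * x) ∂μ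
      = ∫⁻ y in x • B, g y ∂μ := by
        simp_rw [heq]; exact lintegral_indicator (hBopen.smul x).measurableSet _
    _ ≤ ∫⁻ y in ⋃ i ∈ t, (i : G) • B, g y ∂μ := lintegral_mono_set hxB
    _ ≤ ∫⁻ y in ⋃ i : t, ((i : S) : G) • B, g y ∂μ := by
        refine lintegral_mono_set fun z hz => ?_
        simp only [Set.mem_iUnion] at hz ⊢
        obtain ⟨i, hi, h⟩ := hz
        exact ⟨⟨i, hi⟩, h⟩
    _ ≤ ∑' i : t, ∫⁻ y in ((i : S) : G) • B, g y ∂μ := lintegral_iUnion_le _ _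
    _ < ∞ := by
        rw [tsum_fintype]
        refine ENNReal.sum_lt_top.2 fun i _ => ?_
        exact (hind _ (hBopen.smul _).measurableSet).1 (i : S).2
end

section
/- Let q ∈ [1,∞) and p ∈ [1,∞], let B be an open, relatively compact, symmetric neighbourhood of e, and let f ∈ (L^q,L^p)(G). Then the function x ↦ (|f|^q ∗ χ_B)(x) = ∫_G |f(y)|^q χ_B(y⁻¹x) dλ(y) is continuous on G. -/
open MeasureTheory ENNReal NNReal Set Filter Topology Pointwise

variable {G : Type*} [Group G] [TopologicalSpace G] [IsTopologicalGroup G]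
  [T2Space G] [LocallyCompactSpace G] [SigmaCompactSpace G]
  [MeasurableSpace G] [BorelSpace G]

/-- Translation continuity of the Haar measure of a relatively compact open set. -/
lemma eventually_small_diff (μ : Measure G) [μ.IsHaarMeasure]
    (B : Set G) (hBopen : IsOpen B) (hBcpt : IsCompact (closure B))
    {δ : ℝ≥0∞} (hδ0 : 0 < δ) (hδtop : δ ≠ ∞) :
    ∀ᶠ z in 𝓝 (1 : G), μ (B \ z • B) < δ ∧ μ (z • B \ B) < δ := by
  set ha : Measure G := Measure.haar with hha
  set c : ℝ≥0∞ := (Measure.haarScalarFactor μ ha : ℝ≥0∞) + 1 with hc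
  have hc0 : c ≠ 0 := by simp [hc]
  have hctop : c ≠ ∞ := by simp [hc]
  set δ' := δ / 2 / c with hδ'
  have hδ'0 : δ' ≠ 0 := by
    rw [hδ']
    exact (ENNReal.div_pos (ENNReal.div_pos hδ0.ne' (by norm_num)).ne' hctop).ne'
  have haBfin : ha B ≠ ∞ := ((measure_mono subset_closure).trans_lt hBcpt.measure_lt_top).ne
  obtain ⟨K, hKB, hKcomp, hKlt⟩ := hBopen.measurableSet.exists_isCompact_lt_add haBfin hδ'0
  obtain ⟨V, hV, hVK⟩ := compact_open_separated_mul_left hKcomp hBopen hKB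
  have main : ∀ z : G, z • K ⊆ B → μ (B \ z • B) < δ := by
    intro z hzK
    have hopen : IsOpen (B \ z • K) := hBopen.sdiff (hKcomp.smul z).isClosed
    have h1 : μ (B \ z • B) ≤ μ (B \ z • K) :=
      measure_mono (diff_subset_diff_right (smul_set_mono hKB))
    have h2 : μ (B \ z • K) = Measure.haarScalarFactor μ ha • ha (B \ z • K) :=
      Measure.measure_isHaarMeasure_eq_smul_of_isOpen μ ha hopen
    have h3 : ha (B \ z • K) ≤ δ' := by
      have hdiff : ha (B \ z • K) = ha B - ha (z • K) :=
        measure_diff hzK (hKcomp.smul z).isClosed.measurableSet.nullMeasurableSet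
          ((hKcomp.smul z).measure_lt_top).ne
      rw [hdiff, measure_smul]
      exact tsub_le_iff_right.mpr (by rw [add_comm]; exact hKlt.le)
    calc μ (B \ z • B) ≤ Measure.haarScalarFactor μ ha • ha (B \ z • K) := h1.trans_eq h2
      _ ≤ c * δ' := by
          rw [ENNReal.smul_def, smul_eq_mul]
          exact mul_le_mul' (by rw [hc]; exact le_self_add) h3
      _ ≤ δ / 2 := by rw [hδ']; exact ENNReal.mul_div_le
      _ < δ := ENNReal.half_lt_self hδ0.ne' hδtop
  have hinv : Tendsto (fun z : G => z⁻¹) (𝓝 1) (𝓝 1) := by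
    simpa using (continuous_inv.tendsto (1 : G))
  have hev1 : ∀ᶠ z in 𝓝 (1 : G), z ∈ V := hV
  have hev2 : ∀ᶠ z in 𝓝 (1 : G), z⁻¹ ∈ V := hinv.eventually hV
  filter_upwards [hev1, hev2] with z hz1 hz2
  constructor
  · exact main z (fun w hw => hVK (Set.smul_set_subset_smul hz1 hw))
  · have hzB : z • B \ B = z • (B \ z⁻¹ • B) := by
      rw [smul_set_sdiff, smul_smul, mul_inv_cancel, one_smul]
    rw [hzB, measure_smul]
    exact main z⁻¹ (fun w hw => hVK (Set.smul_set_subset_smul hz2 hw))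

theorem statement1
    (μ : Measure G) [μ.IsHaarMeasure]
    (q p : ℝ≥0∞) (hq1 : 1 ≤ q) (hq : q ≠ ∞) (hp1 : 1 ≤ p)
    (B : Set G) (hBopen : IsOpen B) (hBmem : (1 : G) ∈ B)
    (hBcpt : IsCompact (closure B)) (hBsymm : B⁻¹ = B)
    (f : G → ℂ) (hf : AEStronglyMeasurable f μ)
    (hfin : blockNorm μ q p B f < ∞) :
    Continuous fun x : G =>
      ∫⁻ y, (‖f y‖₊ : ℝ≥0∞) ^ q.toReal * B.indicator (fun _ => (1 : ℝ≥0∞)) (y⁻¹ * x) ∂μ := by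
  have hq0 : q ≠ 0 := (lt_of_lt_of_le zero_lt_one hq1).ne'
  have hqr : 0 < 1 / q.toReal := by
    have := ENNReal.toReal_pos hq0 hq
    positivity
  set g : G → ℝ≥0∞ := fun y => (‖f y‖₊ : ℝ≥0∞) ^ q.toReal with hg
  set ν : Measure G := μ.withDensity g with hν
  have hmemiff : ∀ x y : G, x ∈ y • B ↔ y ∈ x • B := by
    intro x y
    rw [mem_smul_set_iff_inv_smul_mem, mem_smul_set_iff_inv_smul_mem, smul_eq_mul, smul_eq_mul]
    constructor
    · intro h
      have h2 : (y⁻¹ * x)⁻¹ ∈ B⁻¹ := Set.inv_mem_inv.mpr h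
      rwa [hBsymm, mul_inv_rev, inv_inv] at h2
    · intro h
      have h2 : (x⁻¹ * y)⁻¹ ∈ B⁻¹ := Set.inv_mem_inv.mpr h
      rwa [hBsymm, mul_inv_rev, inv_inv] at h2
  -- the function equals ν (x • B)
  have hF : ∀ x : G,
      (∫⁻ y, (‖f y‖₊ : ℝ≥0∞) ^ q.toReal * B.indicator (fun _ => (1 : ℝ≥0∞)) (y⁻¹ * x) ∂μ)
        = ν (x • B) := by
    intro x
    rw [hν, withDensity_apply _ (hBopen.smul x).measurableSet,
      ← lintegral_indicator (hBopen.smul x).measurableSet _]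
    refine lintegral_congr fun y => ?_
    by_cases h : y ∈ x • B
    · have hyB : y⁻¹ * x ∈ B := by
        have := (hmemiff x y).mpr h
        rwa [mem_smul_set_iff_inv_smul_mem, smul_eq_mul] at this
      rw [Set.indicator_of_mem h, Set.indicator_of_mem hyB, mul_one]
    · have hyB : y⁻¹ * x ∉ B := by
        intro hc
        exact h ((hmemiff x y).mp (by
          rwa [mem_smul_set_iff_inv_smul_mem, smul_eq_mul]))
      rw [Set.indicator_of_notMem h, Set.indicator_of_notMem hyB, mul_zero]
  simp only [hF]
  -- the eLpNorm over a block in terms of ν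
  have heq : ∀ y : G, eLpNorm ((y • B).indicator f) q μ = ν (y • B) ^ (1 / q.toReal) := by
    intro y
    rw [eLpNorm_indicator_eq_eLpNorm_restrict (hBopen.smul y).measurableSet,
      eLpNorm_eq_lintegral_rpow_enorm_toReal hq0 hq, hν,
      withDensity_apply _ (hBopen.smul y).measurableSet]
    rfl
  -- every point lies in a block of finite ν-measure
  have key : ∀ x : G, ∃ y : G, x ∈ y • B ∧ ν (y • B) < ∞ := by
    intro x
    by_contra hcon
    push_neg at hcon
    have hU : IsOpen (x • B) := hBopen.smul x
    have hxU : x ∈ x • B := ⟨1, hBmem, mul_one x⟩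
    have hUpos : 0 < μ (x • B) := hU.measure_pos μ ⟨x, hxU⟩
    have hbad : ∀ y ∈ x • B, eLpNorm ((y • B).indicator f) q μ = ∞ := by
      intro y hy
      have h1 : ν (y • B) = ∞ :=
        top_le_iff.mp (hcon y ((hmemiff x y).mpr hy))
      rw [heq y, h1]
      exact ENNReal.top_rpow_of_pos hqr
    rw [blockNorm] at hfin
    split_ifs at hfin with hp
    · have h2 : ∀ᵐ y ∂μ, eLpNorm ((y • B).indicator f) q μ < ∞ :=
        (ENNReal.ae_le_essSup _).mono fun y h => lt_of_le_of_lt h hfin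
      have h3 : μ (x • B) = 0 := by
        refine measure_mono_null (fun y hy => ?_) (ae_iff.mp h2)
        simp only [Set.mem_setOf_eq, not_lt, top_le_iff]
        exact hbad y hy
      exact hUpos.ne' h3
    · have hp0 : p ≠ 0 := (lt_of_lt_of_le zero_lt_one hp1).ne'
      have hpr : 0 < 1 / p.toReal := by
        have := ENNReal.toReal_pos hp0 hp
        positivity
      have hprr : (0:ℝ) < p.toReal := ENNReal.toReal_pos hp0 hp
      have hlt : (∫⁻ y, eLpNorm ((y • B).indicator f) q μ ^ p.toReal ∂μ) < ∞ := by
        by_contra h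
        rw [not_lt, top_le_iff] at h
        rw [h, ENNReal.top_rpow_of_pos hpr] at hfin
        exact absurd hfin (by simp)
      have hge : (∞ : ℝ≥0∞) * μ (x • B) ≤
          ∫⁻ y, eLpNorm ((y • B).indicator f) q μ ^ p.toReal ∂μ := by
        calc (∞ : ℝ≥0∞) * μ (x • B) = ∫⁻ _ in x • B, ∞ ∂μ := (setLIntegral_const _ _).symm
          _ = ∫⁻ y, (x • B).indicator (fun _ => (∞ : ℝ≥0∞)) y ∂μ :=
              (lintegral_indicator hU.measurableSet _).symm
          _ ≤ ∫⁻ y, eLpNorm ((y • B).indicator f) q μ ^ p.toReal ∂μ := by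
              refine lintegral_mono fun y => ?_
              by_cases h : y ∈ x • B
              · rw [Set.indicator_of_mem h, hbad y h, ENNReal.top_rpow_of_pos hprr]
              · rw [Set.indicator_of_notMem h]
                exact zero_le
      rw [ENNReal.top_mul hUpos.ne'] at hge
      exact absurd (lt_of_le_of_lt hge hlt) (by simp)
  -- local finiteness of ν
  have locfin : ∀ K : Set G, IsCompact K → ν K < ∞ := by
    intro K hK
    choose Y hY1 hY2 using key
    obtain ⟨t, ht⟩ := hK.elim_finite_subcover (fun x : K => Y (x : G) • B)
      (fun x => hBopen.smul _) (fun x hx => mem_iUnion.mpr ⟨⟨x, hx⟩, hY1 x⟩)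
    calc ν K ≤ ν (⋃ i ∈ t, Y (i : G) • B) := measure_mono ht
      _ ≤ ∑ i ∈ t, ν (Y (i : G) • B) := measure_biUnion_finset_le _ _
      _ < ∞ := ENNReal.sum_lt_top.mpr fun i _ => hY2 _
  -- continuity
  rw [continuous_iff_continuousAt]
  intro x₀
  set K₀ : Set G := x₀ • (closure B * closure B) with hK₀
  have hKc : IsCompact K₀ := (hBcpt.mul hBcpt).smul x₀
  have hx₀mem : x₀ ∈ x₀ • B := ⟨1, hBmem, mul_one x₀⟩
  have hsub : ∀ x ∈ x₀ • B, x • B ⊆ K₀ := by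
    rintro x ⟨b, hb, rfl⟩ w ⟨b', hb', rfl⟩
    exact ⟨b * b', mul_mem_mul (subset_closure hb) (subset_closure hb'),
      by simp [smul_eq_mul, mul_assoc]⟩
  have hνK₀ : ν K₀ ≠ ∞ := (locfin _ hKc).ne
  have hx₀fin : ν (x₀ • B) ≠ ∞ :=
    ((measure_mono (hsub x₀ hx₀mem)).trans_lt (locfin _ hKc)).ne
  have : Tendsto (fun x : G => ν (x • B)) (𝓝 x₀) (𝓝 (ν (x₀ • B))) := by
    rw [ENNReal.tendsto_nhds hx₀fin]
    intro ε hε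
    have hint : (∫⁻ y, K₀.indicator g y ∂μ) ≠ ∞ := by
      rw [lintegral_indicator hKc.isClosed.measurableSet _, ← withDensity_apply _
        hKc.isClosed.measurableSet]
      exact hνK₀
    obtain ⟨δ, hδ0, hδ⟩ := exists_pos_setLIntegral_lt_of_measure_lt hint hε.ne'
    set δ₂ := min δ 1 with hδ₂
    have hδ₂0 : 0 < δ₂ := lt_min hδ0 zero_lt_one
    have hδ₂top : δ₂ ≠ ∞ := (min_le_right _ _).trans_lt one_lt_top |>.ne
    have hsmall := eventually_small_diff μ B hBopen hBcpt hδ₂0 hδ₂top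
    have htend : Tendsto (fun x : G => x₀⁻¹ * x) (𝓝 x₀) (𝓝 1) := by
      have h := (continuous_const.mul continuous_id).tendsto x₀ (f := fun x : G => x₀⁻¹ * x)
      simpa using h
    have hev1 : ∀ᶠ x in 𝓝 x₀, μ (B \ (x₀⁻¹ * x) • B) < δ₂ ∧ μ ((x₀⁻¹ * x) • B \ B) < δ₂ :=
      htend.eventually hsmall
    have hev2 : ∀ᶠ x in 𝓝 x₀, x ∈ x₀ • B := (hBopen.smul x₀).mem_nhds hx₀mem
    filter_upwards [hev1, hev2] with x hx1 hx2
    have hd1 : x₀ • B \ x • B = x₀ • (B \ (x₀⁻¹ * x) • B) := by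
      rw [smul_set_sdiff, smul_smul, mul_inv_cancel_left]
    have hd2 : x • B \ x₀ • B = x₀ • ((x₀⁻¹ * x) • B \ B) := by
      rw [smul_set_sdiff, smul_smul, mul_inv_cancel_left]
    have hm1 : μ (x₀ • B \ x • B) < δ := by
      rw [hd1, measure_smul]
      exact hx1.1.trans_le (min_le_left _ _)
    have hm2 : μ (x • B \ x₀ • B) < δ := by
      rw [hd2, measure_smul]
      exact hx1.2.trans_le (min_le_left _ _)
    have hbound : ∀ s : Set G, MeasurableSet s → s ⊆ K₀ → μ s < δ → ν s < ε := by
      intro s hs hsK hsδ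
      have h1 := hδ s hsδ
      have h2 : (∫⁻ y in s, K₀.indicator g y ∂μ) = ∫⁻ y in s, g y ∂μ :=
        setLIntegral_congr_fun hs (fun y hy => Set.indicator_of_mem (hsK hy) g)
      rw [hν, withDensity_apply _ hs, ← h2]
      exact h1
    have hmeas1 : MeasurableSet (x₀ • B \ x • B) :=
      ((hBopen.smul x₀).measurableSet).diff ((hBopen.smul x).measurableSet)
    have hmeas2 : MeasurableSet (x • B \ x₀ • B) :=
      ((hBopen.smul x).measurableSet).diff ((hBopen.smul x₀).measurableSet)
    have hb1 : ν (x₀ • B \ x • B) < ε :=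
      hbound _ hmeas1 (diff_subset.trans (hsub x₀ hx₀mem)) hm1
    have hb2 : ν (x • B \ x₀ • B) < ε :=
      hbound _ hmeas2 (diff_subset.trans (hsub x hx2)) hm2
    constructor
    · rw [tsub_le_iff_right]
      calc ν (x₀ • B) ≤ ν (x • B ∪ (x₀ • B \ x • B)) := by
            refine measure_mono fun w hw => ?_
            by_cases h : w ∈ x • B
            · exact Or.inl h
            · exact Or.inr ⟨hw, h⟩
        _ ≤ ν (x • B) + ν (x₀ • B \ x • B) := measure_union_le _ _
        _ ≤ ν (x • B) + ε := add_le_add_right hb1.le _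
    · calc ν (x • B) ≤ ν (x₀ • B ∪ (x • B \ x₀ • B)) := by
            refine measure_mono fun w hw => ?_
            by_cases h : w ∈ x₀ • B
            · exact Or.inl h
            · exact Or.inr ⟨hw, h⟩
        _ ≤ ν (x₀ • B) + ν (x • B \ x₀ • B) := measure_union_le _ _
        _ ≤ ν (x₀ • B) + ε := add_le_add_right hb2.le _
  exact this
end

section
/- Let B₁ and B₂ be two open, relatively compact, symmetric neighbourhoods of e and let p,q ∈ [1,∞]. Then there exists a constant C = C(B₁,B₂,p,q) > 0 such that _{B₂}‖f‖_{q,p} ≤ C · _{B₁}‖f‖_{q,p} for every measurable function f on G. In particular the space (L^q,L^p)(G) does not depend on the choice of the neighbourhood B used to define it. -/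
open MeasureTheory ENNReal NNReal Set Filter Topology Pointwise

variable {G : Type*} [Group G] [TopologicalSpace G] [IsTopologicalGroup G]
  [T2Space G] [LocallyCompactSpace G] [SigmaCompactSpace G]
  [MeasurableSpace G] [BorelSpace G]

/-! ### Auxiliary lemmas -/

/-- Uniqueness of Haar measure on a σ-compact locally compact group. -/
lemma aux_haar_eq_smul (μ' μ : Measure G) [μ.IsHaarMeasure] [μ'.IsHaarMeasure] :
    μ' = Measure.haarScalarFactor μ' μ • μ := by
  ext s hs
  have h1 : (⋃ n, s ∩ compactCovering G n) = s := by
    rw [← inter_iUnion, iUnion_compactCovering, inter_univ]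
  have hmono : Monotone fun n => s ∩ compactCovering G n := fun m n h =>
    inter_subset_inter_right _ (compactCovering_subset G h)
  have e1 := hmono.measure_iUnion (μ := μ')
  have e2 := hmono.measure_iUnion (μ := Measure.haarScalarFactor μ' μ • μ)
  rw [h1] at e1 e2
  rw [e1, e2]
  exact iSup_congr fun n => by
    rw [Measure.smul_apply]
    exact Measure.measure_isMulInvariant_eq_smul_of_isCompact_closure μ' μ
      ((isCompact_compactCovering G n).closure_of_subset inter_subset_right)

/-- Any Haar measure on a σ-compact locally compact group is regular. -/
lemma aux_regular (μ : Measure G) [μ.IsHaarMeasure] : μ.Regular := by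
  rw [aux_haar_eq_smul μ Measure.haar]
  infer_instance

/-- The right translate of a Haar measure is a positive scalar multiple of it. -/
lemma aux_map_mulRight_eq_smul (μ : Measure G) [μ.IsHaarMeasure] (x : G) :
    ∃ c : ℝ≥0, 0 < c ∧ μ.map (· * x) = (c : ℝ≥0∞) • μ := by
  refine ⟨Measure.haarScalarFactor (μ.map (· * x)) μ,
    Measure.haarScalarFactor_pos_of_isHaarMeasure _ _, ?_⟩
  refine (aux_haar_eq_smul (μ.map (· * x)) μ).trans ?_
  ext s hs
  simp only [Measure.smul_apply, ENNReal.smul_def, smul_eq_mul]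

lemma aux_eventually_subset_smul {K B : Set G} (hK : IsCompact K) (hB : IsOpen B)
    {y : G} (hKB : K ⊆ y • B) : ∀ᶠ y' in 𝓝 y, K ⊆ y' • B := by
  have hU : IsOpen {p : G × G | p.1⁻¹ * p.2 ∈ B} :=
    hB.preimage (continuous_fst.inv.mul continuous_snd)
  have hsub : ({y} : Set G) ×ˢ K ⊆ {p : G × G | p.1⁻¹ * p.2 ∈ B} := by
    rintro ⟨a, b⟩ ⟨ha, hb⟩
    simp only [mem_singleton_iff] at ha
    subst ha
    have h2 := hKB hb
    rwa [mem_smul_set_iff_inv_smul_mem, smul_eq_mul] at h2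
  obtain ⟨V, W, hV, hW, hyV, hKW, hVW⟩ :=
    generalized_tube_lemma isCompact_singleton hK hU hsub
  filter_upwards [hV.mem_nhds (hyV rfl)] with y' hy' k hk
  rw [mem_smul_set_iff_inv_smul_mem, smul_eq_mul]
  exact hVW (Set.mk_mem_prod hy' (hKW hk))

lemma aux_lsc_measure_inter_smul (μ : Measure G) [Measure.InnerRegularCompactLTTop μ] {S B : Set G}
    (hS : MeasurableSet S) (hSfin : μ S ≠ ∞) (hB : IsOpen B) :
    LowerSemicontinuous fun y : G => μ (S ∩ y • B) := by
  intro y c hc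
  have hmeas : MeasurableSet (S ∩ y • B) := hS.inter (hB.smul y).measurableSet
  have hfin : μ (S ∩ y • B) ≠ ∞ :=
    ((measure_mono inter_subset_left).trans_lt (lt_top_iff_ne_top.mpr hSfin)).ne
  replace hc : c < μ (S ∩ y • B) := hc
  rw [hmeas.measure_eq_iSup_isCompact_of_ne_top hfin] at hc
  simp only [lt_iSup_iff] at hc
  obtain ⟨K, hKsub, hKcpt, hcK⟩ := hc
  filter_upwards [aux_eventually_subset_smul hKcpt hB (hKsub.trans inter_subset_right)]
    with y' hy'
  exact hcK.trans_le (measure_mono (subset_inter (hKsub.trans inter_subset_left) hy'))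

lemma aux_measurable_measure_inter_smul (μ : Measure G) [Measure.InnerRegularCompactLTTop μ]
    [SigmaFinite μ] {S B : Set G} (hS : MeasurableSet S) (hB : IsOpen B) :
    Measurable fun y : G => μ (S ∩ y • B) := by
  have key : ∀ y : G, μ (S ∩ y • B) = ⨆ n, μ (S ∩ spanningSets μ n ∩ y • B) := by
    intro y
    have hmono : Monotone fun n => S ∩ spanningSets μ n ∩ y • B := fun m n h =>
      inter_subset_inter_left _ (inter_subset_inter_right _ (monotone_spanningSets μ h))
    have hU : (⋃ n, S ∩ spanningSets μ n ∩ y • B) = S ∩ y • B := by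
      rw [← iUnion_inter, ← inter_iUnion, iUnion_spanningSets, inter_univ]
    have h2 := hmono.measure_iUnion (μ := μ)
    rw [hU] at h2
    exact h2
  simp_rw [key]
  exact Measurable.iSup fun n =>
    (aux_lsc_measure_inter_smul μ (hS.inter (measurableSet_spanningSets μ n))
      (((measure_mono inter_subset_right).trans_lt
        (measure_spanningSets_lt_top μ n)).ne) hB).measurable

lemma aux_measurable_setLIntegral_smul (μ : Measure G) [Measure.InnerRegularCompactLTTop μ]
    [SigmaFinite μ] {B : Set G} (hB : IsOpen B) {φ : G → ℝ≥0∞} (hφ : Measurable φ) :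
    Measurable fun y : G => ∫⁻ x in y • B, φ x ∂μ := by
  have key : ∀ y : G,
      ∫⁻ x in y • B, φ x ∂μ = ⨆ n, ∫⁻ x in y • B, SimpleFunc.eapprox φ n x ∂μ := by
    intro y
    calc ∫⁻ x in y • B, φ x ∂μ
        = ∫⁻ x in y • B, ⨆ n, SimpleFunc.eapprox φ n x ∂μ :=
          lintegral_congr fun x => (SimpleFunc.iSup_eapprox_apply hφ x).symm
      _ = ⨆ n, ∫⁻ x in y • B, SimpleFunc.eapprox φ n x ∂μ :=
          lintegral_iSup (fun n => (SimpleFunc.eapprox φ n).measurable)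
            (fun m n h x => SimpleFunc.monotone_eapprox φ h x)
  simp_rw [key]
  refine Measurable.iSup fun n => ?_
  refine SimpleFunc.induction
    (motive := fun ψ : SimpleFunc G ℝ≥0∞ => Measurable fun y => ∫⁻ x in y • B, ψ x ∂μ)
    ?_ ?_ (SimpleFunc.eapprox φ n)
  · intro c s hs
    have hval : ∀ y : G,
        ∫⁻ x in y • B, (SimpleFunc.piecewise s hs (SimpleFunc.const G c)
          (SimpleFunc.const G 0)) x ∂μ = c * μ (s ∩ y • B) := by
      intro y
      have hcoe : ∀ x : G, (SimpleFunc.piecewise s hs (SimpleFunc.const G c)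
          (SimpleFunc.const G 0)) x = s.indicator (fun _ => c) x := by
        intro x
        classical
        rw [SimpleFunc.piecewise_apply, Set.indicator_apply]
        simp
      rw [lintegral_congr hcoe, lintegral_indicator_const hs c, Measure.restrict_apply hs]
    simp_rw [hval]
    exact measurable_const.mul (aux_measurable_measure_inter_smul μ hs hB)
  · intro f g _ hf hg
    have hval : ∀ y : G, ∫⁻ x in y • B, (f + g) x ∂μ
        = (∫⁻ x in y • B, f x ∂μ) + ∫⁻ x in y • B, g x ∂μ := by
      intro y
      simp only [SimpleFunc.coe_add, Pi.add_apply]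
      exact lintegral_add_left f.measurable _
    simp_rw [hval]
    exact hf.add hg

lemma aux_measurable_eLpNorm (μ : Measure G) [Measure.InnerRegularCompactLTTop μ] [SigmaFinite μ]
    {B : Set G} (hB : IsOpen B) {f : G → ℂ} (hf : StronglyMeasurable f)
    (q : ℝ≥0∞) (hq0 : q ≠ 0) :
    Measurable fun y : G => eLpNorm ((y • B).indicator f) q μ := by
  by_cases hqtop : q = ∞
  · subst hqtop
    apply measurable_of_Iic
    intro c
    have hSc : MeasurableSet {x : G | c < (‖f x‖₊ : ℝ≥0∞)} :=
      measurableSet_lt measurable_const hf.measurable.enorm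
    have hchar : ∀ φ : G → ℝ≥0∞, essSup φ μ ≤ c ↔ μ {x | c < φ x} = 0 := by
      intro φ
      constructor
      · intro h
        have h2 : ∀ᵐ x ∂μ, φ x ≤ c := (_root_.ae_le_essSup (f := φ)).mono fun x hx => hx.trans h
        simpa only [not_le] using ae_iff.mp h2
      · intro h
        refine essSup_le_of_ae_le c (ae_iff.mpr ?_)
        simpa only [not_le] using h
    have hset : ∀ y : G, {x : G | c < ‖(y • B).indicator f x‖ₑ}
        = {x : G | c < (‖f x‖₊ : ℝ≥0∞)} ∩ y • B := by
      intro y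
      ext x
      by_cases hx : x ∈ y • B <;>
        simp [Set.indicator_of_mem, Set.indicator_of_notMem, hx, enorm_eq_nnnorm]
    have heq : (fun y : G => eLpNorm ((y • B).indicator f) ∞ μ) ⁻¹' Iic c
        = (fun y : G => μ ({x : G | c < (‖f x‖₊ : ℝ≥0∞)} ∩ y • B)) ⁻¹' {0} := by
      ext y
      simp only [mem_preimage, mem_Iic, mem_singleton_iff]
      rw [eLpNorm_exponent_top, eLpNormEssSup, hchar, hset]
    rw [heq]
    exact aux_measurable_measure_inter_smul μ hSc hB (measurableSet_singleton 0)
  · have hqr : 0 < q.toReal := ENNReal.toReal_pos hq0 hqtop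
    have hrep : ∀ y : G, eLpNorm ((y • B).indicator f) q μ
        = (∫⁻ x in y • B, (‖f x‖₊ : ℝ≥0∞) ^ q.toReal ∂μ) ^ (1 / q.toReal) := by
      intro y
      rw [eLpNorm_eq_lintegral_rpow_enorm_toReal hq0 hqtop]
      congr 1
      rw [← lintegral_indicator (hB.smul y).measurableSet
        (fun x => (‖f x‖₊ : ℝ≥0∞) ^ q.toReal)]
      refine lintegral_congr fun x => ?_
      by_cases hx : x ∈ y • B
      · simp [Set.indicator_of_mem hx]
        rfl
      · simp [Set.indicator_of_notMem hx, ENNReal.zero_rpow_of_pos hqr]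
    simp_rw [hrep]
    exact ENNReal.continuous_rpow_const.measurable.comp
      (aux_measurable_setLIntegral_smul μ hB
        (ENNReal.continuous_rpow_const.measurable.comp hf.measurable.enorm))

lemma aux_essSup_finset_sum_le {ι : Type*} {α : Type*} [MeasurableSpace α] (μ : Measure α)
    (t : Finset ι) (h : ι → α → ℝ≥0∞) :
    essSup (fun y => ∑ i ∈ t, h i y) μ ≤ ∑ i ∈ t, essSup (h i) μ := by
  classical
  induction t using Finset.induction_on with
  | empty =>
    simp only [Finset.sum_empty]
    exact essSup_le_of_ae_le (0 : ℝ≥0∞) (ae_of_all _ fun _ => le_rfl)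
  | @insert a s ha ih =>
    simp only [Finset.sum_insert ha]
    calc essSup (fun y => h a y + ∑ i ∈ s, h i y) μ
        ≤ essSup (h a) μ + essSup (fun y => ∑ i ∈ s, h i y) μ := by
          refine essSup_le_of_ae_le _ ?_
          filter_upwards [_root_.ae_le_essSup (f := h a),
            _root_.ae_le_essSup (f := fun y => ∑ i ∈ s, h i y)] with y h1 h2
          exact add_le_add h1 h2
      _ ≤ essSup (h a) μ + ∑ i ∈ s, essSup (h i) μ := add_le_add le_rfl ih

lemma aux_sum_rpow_le {ι : Type*} (t : Finset ι) (a : ι → ℝ≥0∞) {r : ℝ} (hr : 0 < r) :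
    (∑ i ∈ t, a i) ^ r ≤ (t.card : ℝ≥0∞) ^ r * ∑ i ∈ t, a i ^ r := by
  rcases t.eq_empty_or_nonempty with rfl | hne
  · simp [ENNReal.zero_rpow_of_pos hr]
  · obtain ⟨i₀, hi₀, hmax⟩ := t.exists_max_image a hne
    calc (∑ i ∈ t, a i) ^ r ≤ ((t.card : ℝ≥0∞) * a i₀) ^ r := by
          apply ENNReal.rpow_le_rpow _ hr.le
          calc ∑ i ∈ t, a i ≤ ∑ _i ∈ t, a i₀ := Finset.sum_le_sum fun i hi => hmax i hi
            _ = t.card * a i₀ := by rw [Finset.sum_const, nsmul_eq_mul]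
      _ = (t.card : ℝ≥0∞) ^ r * a i₀ ^ r := ENNReal.mul_rpow_of_nonneg _ _ hr.le
      _ ≤ (t.card : ℝ≥0∞) ^ r * ∑ i ∈ t, a i ^ r := by
          gcongr
          exact Finset.single_le_sum (f := fun i => a i ^ r) (fun i _ => zero_le) hi₀

lemma aux_blockNorm_congr (μ : Measure G) (q p : ℝ≥0∞) {f g : G → ℂ} (h : f =ᵐ[μ] g)
    (B : Set G) : blockNorm μ q p B f = blockNorm μ q p B g := by
  have he : ∀ y : G, eLpNorm ((y • B).indicator f) q μ = eLpNorm ((y • B).indicator g) q μ := by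
    intro y
    apply eLpNorm_congr_ae
    filter_upwards [h] with z hz
    by_cases hzB : z ∈ y • B
    · rw [Set.indicator_of_mem hzB, Set.indicator_of_mem hzB, hz]
    · rw [Set.indicator_of_notMem hzB, Set.indicator_of_notMem hzB]
  unfold blockNorm
  simp_rw [he]

lemma aux_stepA (μ : Measure G) (q : ℝ≥0∞) (hq1 : 1 ≤ q) {B₁ B₂ : Set G}
    (hB₁open : IsOpen B₁) (t : Finset G) (ht : closure B₂ ⊆ ⋃ x ∈ t, x • B₁)
    {f : G → ℂ} (hf : AEStronglyMeasurable f μ) (y : G) :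
    eLpNorm ((y • B₂).indicator f) q μ ≤ ∑ x ∈ t, eLpNorm (((y * x) • B₁).indicator f) q μ := by
  have hAESM : ∀ x : G, AEStronglyMeasurable (((y * x) • B₁).indicator f) μ :=
    fun x => hf.indicator (hB₁open.smul (y * x)).measurableSet
  have hyc : y • B₂ ⊆ ⋃ x ∈ t, (y * x) • B₁ := by
    intro z hz
    rcases Set.mem_smul_set.mp hz with ⟨b, hb, rfl⟩
    obtain ⟨x, hx, hbx⟩ := mem_iUnion₂.mp (ht (subset_closure hb))
    rcases Set.mem_smul_set.mp hbx with ⟨w, hw, rfl⟩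
    refine mem_iUnion₂.mpr ⟨x, hx, ?_⟩
    rw [smul_smul]
    exact Set.smul_mem_smul_set hw
  calc eLpNorm ((y • B₂).indicator f) q μ
      ≤ eLpNorm (fun z => ∑ x ∈ t, ‖((y * x) • B₁).indicator f z‖) q μ := by
        apply eLpNorm_mono_real
        intro z
        by_cases hz : z ∈ y • B₂
        · rw [Set.indicator_of_mem hz]
          obtain ⟨x, hx, hzx⟩ := mem_iUnion₂.mp (hyc hz)
          calc ‖f z‖ = ‖((y * x) • B₁).indicator f z‖ := by rw [Set.indicator_of_mem hzx]
            _ ≤ ∑ x ∈ t, ‖((y * x) • B₁).indicator f z‖ :=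
              Finset.single_le_sum (f := fun x' => ‖((y * x') • B₁).indicator f z‖)
                (fun i _ => norm_nonneg _) hx
        · rw [Set.indicator_of_notMem hz, norm_zero]
          exact Finset.sum_nonneg fun i _ => norm_nonneg _
    _ = eLpNorm (∑ x ∈ t, fun z => ‖((y * x) • B₁).indicator f z‖) q μ := by
        congr 1
        funext z
        rw [Finset.sum_apply]
    _ ≤ ∑ x ∈ t, eLpNorm (fun z => ‖((y * x) • B₁).indicator f z‖) q μ :=
        eLpNorm_sum_le (fun x _ => (hAESM x).norm) hq1
    _ = ∑ x ∈ t, eLpNorm (((y * x) • B₁).indicator f) q μ :=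
        Finset.sum_congr rfl fun x _ => eLpNorm_norm _

/-- Key lemma: one-sided comparison of block norms. -/
lemma aux_blockNorm_le (μ : Measure G) [μ.IsHaarMeasure]
    {q p : ℝ≥0∞} (hq1 : 1 ≤ q) (hp1 : 1 ≤ p)
    {B₁ B₂ : Set G} (hB₁open : IsOpen B₁) (hB₁mem : (1 : G) ∈ B₁)
    (hB₂cpt : IsCompact (closure B₂)) :
    ∃ C : ℝ≥0∞, C ≠ ∞ ∧ ∀ f : G → ℂ, AEStronglyMeasurable f μ →
      blockNorm μ q p B₂ f ≤ C * blockNorm μ q p B₁ f := by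
  haveI hreg : μ.Regular := aux_regular μ
  have hq0 : q ≠ 0 := (lt_of_lt_of_le zero_lt_one hq1).ne'
  -- finite cover of `closure B₂` by translates of `B₁`
  have hcov : closure B₂ ⊆ ⋃ x : G, x • B₁ := by
    intro z _
    refine mem_iUnion.2 ⟨z, ?_⟩
    rw [mem_smul_set_iff_inv_smul_mem, smul_eq_mul, inv_mul_cancel]
    exact hB₁mem
  obtain ⟨t, ht⟩ := hB₂cpt.elim_finite_subcover (fun x : G => x • B₁)
    (fun x => hB₁open.smul x) hcov
  choose c hc0 hc using fun x : G => aux_map_mulRight_eq_smul μ x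
  by_cases hp : p = ∞
  · refine ⟨(t.card : ℝ≥0∞), ENNReal.natCast_ne_top _, fun f hf => ?_⟩
    rw [blockNorm, if_pos hp, blockNorm, if_pos hp]
    calc essSup (fun y => eLpNorm ((y • B₂).indicator f) q μ) μ
        ≤ essSup (fun y => ∑ x ∈ t, eLpNorm (((y * x) • B₁).indicator f) q μ) μ :=
          essSup_mono_ae (ae_of_all _ (aux_stepA μ q hq1 hB₁open t ht hf))
      _ ≤ ∑ x ∈ t, essSup (fun y => eLpNorm (((y * x) • B₁).indicator f) q μ) μ :=
          aux_essSup_finset_sum_le μ t _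
      _ = ∑ x ∈ t, essSup (fun y => eLpNorm ((y • B₁).indicator f) q μ) μ := by
          refine Finset.sum_congr rfl fun x _ => ?_
          have hemb := (Homeomorph.mulRight x).measurableEmbedding
          have h2 := hemb.essSup_map_measure
            (g := fun z : G => eLpNorm ((z • B₁).indicator f) q μ) (μ := μ)
          rw [show ⇑(Homeomorph.mulRight x) = fun y : G => y * x from rfl] at h2
          rw [show Measure.map (fun y : G => y * x) μ = ((c x : ℝ≥0∞) • μ) from hc x] at h2
          rw [show ((c x : ℝ≥0∞) • μ) = c x • μ from rfl, essSup_smul_measure (hc0 x).ne'] at h2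
          have h4 : (fun z : G => eLpNorm ((z • B₁).indicator f) q μ) ∘ (fun y : G => y * x)
              = fun y : G => eLpNorm (((y * x) • B₁).indicator f) q μ := rfl
          rw [h4] at h2
          exact h2.symm
      _ = (t.card : ℝ≥0∞) * essSup (fun y => eLpNorm ((y • B₁).indicator f) q μ) μ := by
          rw [Finset.sum_const, nsmul_eq_mul]
  · have hp0 : p ≠ 0 := (lt_of_lt_of_le zero_lt_one hp1).ne'
    have hpr : 0 < p.toReal := ENNReal.toReal_pos hp0 hp
    refine ⟨(t.card : ℝ≥0∞) * (∑ x ∈ t, (c x : ℝ≥0∞)) ^ (1 / p.toReal), ?_, fun f hf => ?_⟩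
    · refine ENNReal.mul_ne_top (ENNReal.natCast_ne_top _)
        (ENNReal.rpow_ne_top_of_nonneg (by positivity) ?_)
      rw [← ENNReal.coe_finset_sum]
      exact ENNReal.coe_ne_top
    · obtain ⟨g, hg, hfg⟩ := hf
      rw [aux_blockNorm_congr μ q p hfg B₂, aux_blockNorm_congr μ q p hfg B₁]
      have hgae : AEStronglyMeasurable g μ := hg.aestronglyMeasurable
      set H : G → ℝ≥0∞ := fun y => eLpNorm ((y • B₁).indicator g) q μ with hH
      have hHmeas : Measurable H := aux_measurable_eLpNorm μ hB₁open hg q hq0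
      rw [blockNorm, if_neg hp, blockNorm, if_neg hp]
      have h1 : ∀ y : G, eLpNorm ((y • B₂).indicator g) q μ ^ p.toReal
          ≤ (t.card : ℝ≥0∞) ^ p.toReal * ∑ x ∈ t, H (y * x) ^ p.toReal := by
        intro y
        calc eLpNorm ((y • B₂).indicator g) q μ ^ p.toReal
            ≤ (∑ x ∈ t, H (y * x)) ^ p.toReal :=
              ENNReal.rpow_le_rpow (aux_stepA μ q hq1 hB₁open t ht hgae y) hpr.le
          _ ≤ _ := aux_sum_rpow_le t _ hpr
      have h2 : ∫⁻ y, eLpNorm ((y • B₂).indicator g) q μ ^ p.toReal ∂μ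
          ≤ (t.card : ℝ≥0∞) ^ p.toReal *
            ((∑ x ∈ t, (c x : ℝ≥0∞)) * ∫⁻ y, H y ^ p.toReal ∂μ) := by
        calc ∫⁻ y, eLpNorm ((y • B₂).indicator g) q μ ^ p.toReal ∂μ
            ≤ ∫⁻ y, (t.card : ℝ≥0∞) ^ p.toReal * ∑ x ∈ t, H (y * x) ^ p.toReal ∂μ :=
              lintegral_mono h1
          _ = (t.card : ℝ≥0∞) ^ p.toReal * ∫⁻ y, ∑ x ∈ t, H (y * x) ^ p.toReal ∂μ :=
              lintegral_const_mul' _ _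
                (ENNReal.rpow_ne_top_of_nonneg hpr.le (ENNReal.natCast_ne_top _))
          _ = (t.card : ℝ≥0∞) ^ p.toReal * ∑ x ∈ t, ∫⁻ y, H (y * x) ^ p.toReal ∂μ := by
              have hsum : ∫⁻ y, ∑ x ∈ t, H (y * x) ^ p.toReal ∂μ
                  = ∑ x ∈ t, ∫⁻ y, H (y * x) ^ p.toReal ∂μ :=
                lintegral_finset_sum t (fun x _ => by
                  exact ENNReal.continuous_rpow_const.measurable.comp
                    (hHmeas.comp (measurable_mul_const x)))
              rw [hsum]
          _ = (t.card : ℝ≥0∞) ^ p.toReal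
              * ∑ x ∈ t, (c x : ℝ≥0∞) * ∫⁻ y, H y ^ p.toReal ∂μ := by
              congr 1
              refine Finset.sum_congr rfl fun x _ => ?_
              have hemb := (Homeomorph.mulRight x).measurableEmbedding
              have h3 := hemb.lintegral_map (f := fun z : G => H z ^ p.toReal) (μ := μ)
              rw [show ⇑(Homeomorph.mulRight x) = fun y : G => y * x from rfl] at h3
              rw [show Measure.map (fun y : G => y * x) μ = ((c x : ℝ≥0∞) • μ) from hc x,
                lintegral_smul_measure] at h3
              exact h3.symm
          _ = (t.card : ℝ≥0∞) ^ p.toReal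
              * ((∑ x ∈ t, (c x : ℝ≥0∞)) * ∫⁻ y, H y ^ p.toReal ∂μ) := by
              rw [← Finset.sum_mul]
      calc (∫⁻ y, eLpNorm ((y • B₂).indicator g) q μ ^ p.toReal ∂μ) ^ (1 / p.toReal)
          ≤ ((t.card : ℝ≥0∞) ^ p.toReal *
              ((∑ x ∈ t, (c x : ℝ≥0∞)) * ∫⁻ y, H y ^ p.toReal ∂μ)) ^ (1 / p.toReal) :=
            ENNReal.rpow_le_rpow h2 (by positivity)
        _ = (t.card : ℝ≥0∞) * ((∑ x ∈ t, (c x : ℝ≥0∞)) ^ (1 / p.toReal) *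
              (∫⁻ y, H y ^ p.toReal ∂μ) ^ (1 / p.toReal)) := by
            rw [ENNReal.mul_rpow_of_nonneg _ _ (by positivity),
              ENNReal.mul_rpow_of_nonneg _ _ (by positivity),
              ← ENNReal.rpow_mul, mul_one_div_cancel hpr.ne', ENNReal.rpow_one]
        _ = (t.card : ℝ≥0∞) * (∑ x ∈ t, (c x : ℝ≥0∞)) ^ (1 / p.toReal)
              * (∫⁻ y, H y ^ p.toReal ∂μ) ^ (1 / p.toReal) := by
            rw [mul_assoc]

theorem statement2
    (μ : Measure G) [μ.IsHaarMeasure]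
    (q p : ℝ≥0∞) (hq1 : 1 ≤ q) (hp1 : 1 ≤ p)
    (B₁ B₂ : Set G)
    (hB₁open : IsOpen B₁) (hB₁mem : (1 : G) ∈ B₁)
    (hB₁cpt : IsCompact (closure B₁)) (hB₁symm : B₁⁻¹ = B₁)
    (hB₂open : IsOpen B₂) (hB₂mem : (1 : G) ∈ B₂)
    (hB₂cpt : IsCompact (closure B₂)) (hB₂symm : B₂⁻¹ = B₂) :
    (∃ C : ℝ≥0, 0 < C ∧ ∀ f : G → ℂ, AEStronglyMeasurable f μ →
        blockNorm μ q p B₂ f ≤ (C : ℝ≥0∞) * blockNorm μ q p B₁ f) ∧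
      ∀ f : G → ℂ, AEStronglyMeasurable f μ →
        (blockNorm μ q p B₁ f < ∞ ↔ blockNorm μ q p B₂ f < ∞) := by
  obtain ⟨C₂, hC₂top, hC₂⟩ := aux_blockNorm_le μ hq1 hp1 hB₁open hB₁mem hB₂cpt
  obtain ⟨C₁, hC₁top, hC₁⟩ := aux_blockNorm_le μ hq1 hp1 hB₂open hB₂mem hB₁cpt
  have hle : ∀ (D : ℝ≥0∞), D ≠ ∞ → D ≤ ((D.toNNReal + 1 : ℝ≥0) : ℝ≥0∞) := by
    intro D hD
    calc D = (D.toNNReal : ℝ≥0∞) := (ENNReal.coe_toNNReal hD).symm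
      _ ≤ (D.toNNReal : ℝ≥0∞) + 1 := le_self_add
      _ = ((D.toNNReal + 1 : ℝ≥0) : ℝ≥0∞) := by push_cast; ring
  constructor
  · refine ⟨C₂.toNNReal + 1, lt_of_lt_of_le zero_lt_one le_add_self, fun f hf => ?_⟩
    calc blockNorm μ q p B₂ f ≤ C₂ * blockNorm μ q p B₁ f := hC₂ f hf
      _ ≤ ((C₂.toNNReal + 1 : ℝ≥0) : ℝ≥0∞) * blockNorm μ q p B₁ f := by
          gcongr
          exact hle C₂ hC₂top
  · intro f hf
    constructor
    · intro h
      exact lt_of_le_of_lt (hC₂ f hf) (ENNReal.mul_lt_top hC₂top.lt_top h)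
    · intro h
      exact lt_of_le_of_lt (hC₁ f hf) (ENNReal.mul_lt_top hC₁top.lt_top h)
end

section
/- Let p,q ∈ [1,∞]. There exist constants C₁ > 0 and C₂ > 0, depending only on γ, ρ, p and q, such that for every r > 0 and every f ∈ (L^q,L^p)(G): C₁ ‖f‖^{π_r}_{q,p} ≤ r^{−ρ/p} · _{B(e,r)}‖f‖_{q,p} ≤ C₂ ‖f‖^{π_r}_{q,p} (with r^{−ρ/p} = 1 when p = ∞). -/
open MeasureTheory ENNReal NNReal Set Filter Topology Pointwise

variable {G : Type*} [Group G] [TopologicalSpace G] [IsTopologicalGroup G]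
  [T2Space G] [LocallyCompactSpace G] [SigmaCompactSpace G]
  [MeasurableSpace G] [BorelSpace G]

section Aux

lemma mem_smul_gball {nm : G → ℝ} {x y : G} {t : ℝ} :
    y ∈ x • gball nm 1 t ↔ nm (x⁻¹ * y) < t := by
  rw [Set.mem_smul_set_iff_inv_smul_mem]
  simp [gball, smul_eq_mul]

lemma isOpen_gball {nm : G → ℝ} (hc : Continuous nm) (x : G) (t : ℝ) :
    IsOpen (gball nm x t) :=
  isOpen_lt (hc.comp (continuous_const.mul continuous_id)) continuous_const

lemma eLpNorm_indicator_mono' {q : ℝ≥0∞} {μ : Measure G} (f : G → ℂ) {s t : Set G} (h : s ⊆ t) :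
    eLpNorm (s.indicator f) q μ ≤ eLpNorm (t.indicator f) q μ := by
  apply eLpNorm_mono
  intro x
  by_cases hx : x ∈ s
  · rw [Set.indicator_of_mem hx, Set.indicator_of_mem (h hx)]
  · rw [Set.indicator_of_notMem hx]
    simp

lemma exists_nnreal_rpow' (E : ℝ≥0∞) (h0 : E ≠ 0) (ht : E ≠ ∞) {pt : ℝ} (hpt : 0 < pt) :
    ∃ C : ℝ≥0, 0 < C ∧ (C : ℝ≥0∞) ^ pt = E := by
  have h1 : E ^ (1/pt) ≠ 0 := by
    simp [ENNReal.rpow_eq_zero_iff, h0, ht]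
  have h2 : E ^ (1/pt) ≠ ∞ := by
    simp [ENNReal.rpow_eq_top_iff, h0, ht]
  refine ⟨(E ^ (1/pt)).toNNReal, ?_, ?_⟩
  · rw [ENNReal.toNNReal_pos_iff]
    exact ⟨pos_iff_ne_zero.mpr h1, lt_top_iff_ne_top.mpr h2⟩
  · rw [ENNReal.coe_toNNReal h2, ← ENNReal.rpow_mul, one_div_mul_cancel hpt.ne',
      ENNReal.rpow_one]

end Aux

set_option maxHeartbeats 2000000 in
theorem statement4
    (μ : Measure G) [μ.IsHaarMeasure]
    (nm : G → ℝ) (γ ρ : ℝ)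
    (hnm_cont : Continuous nm)
    (hnm_nonneg : ∀ x : G, 0 ≤ nm x)
    (hnm_zero : ∀ x : G, nm x = 0 ↔ x = 1)
    (hnm_inv : ∀ x : G, nm x⁻¹ = nm x)
    (hγ : 1 ≤ γ)
    (hnm_mul : ∀ x y : G, nm (x * y) ≤ γ * (nm x + nm y))
    (hball_cpt : ∀ (x : G) (r : ℝ), 0 < r → IsCompact (closure (gball nm x r)))
    (hρ : 0 < ρ)
    (hvol : ∀ r : ℝ, 0 < r → μ (gball nm 1 r) = ENNReal.ofReal (r ^ ρ))
    (πr : ℝ → Set (Set G))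
    (hπr : ∀ r : ℝ, 0 < r → IsUniformPartition (πr r)
      (gball nm 1 (r / (4 * γ ^ 2)))
      (gball nm 1 (r / (4 * γ ^ 2)) * gball nm 1 (r / (4 * γ ^ 2))))
   (q p : ℝ≥0∞) (hq1 : 1 ≤ q) (hp1 : 1 ≤ p) :
    ∃ C₁ C₂ : ℝ≥0, 0 < C₁ ∧ 0 < C₂ ∧
      ∀ r : ℝ, 0 < r → ∀ f : G → ℂ, AEStronglyMeasurable f μ →
        blockNorm μ q p (gball nm 1 1) f < ∞ →
        (C₁ : ℝ≥0∞) * partNorm μ q p (πr r) f ≤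
            (if p = ∞ then 1 else ENNReal.ofReal r ^ (-(ρ / p.toReal))) *
              blockNorm μ q p (gball nm 1 r) f ∧
          (if p = ∞ then 1 else ENNReal.ofReal r ^ (-(ρ / p.toReal))) *
              blockNorm μ q p (gball nm 1 r) f ≤ (C₂ : ℝ≥0∞) * partNorm μ q p (πr r) f := by
  classical
  have hγ0 : (0:ℝ) < γ := lt_of_lt_of_le one_pos hγ
  set N : ℕ := ⌈(8*γ^3)^ρ⌉₊ with hNdef
  have hγ3 : (1:ℝ) ≤ 8*γ^3 := by nlinarith [sq_nonneg γ, sq_nonneg (γ-1), sq_nonneg (γ+1)]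
  have hX1 : (1:ℝ) ≤ (8*γ^3)^ρ := Real.one_le_rpow hγ3 hρ.le
  have hN1 : 1 ≤ N := Nat.one_le_ceil_iff.mpr (lt_of_lt_of_le one_pos hX1)
  have hNne0 : (N : ℝ≥0∞) ≠ 0 := by
    simp only [ne_eq, Nat.cast_eq_zero]
    omega
  -- master geometric/combinatorial facts
  have hmain : ∀ r : ℝ, 0 < r → ∃ c : Set G → G,
      (∀ A ∈ πr r, c A ∈ A) ∧
      (∀ A ∈ πr r, ∀ y : G, y ∈ c A • gball nm 1 (r/(2*γ)) → A ⊆ y • gball nm 1 r) ∧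
      (∀ A ∈ πr r, ∀ y : G, (A ∩ (y • gball nm 1 r)).Nonempty →
        y ∈ c A • gball nm 1 (2*γ*r)) ∧
      (∀ (y : G) (T : Finset (Set G)), ↑T ⊆ πr r →
        (∀ A ∈ T, (A ∩ (y • gball nm 1 r)).Nonempty) → T.card ≤ N) ∧
      (∀ y : G, ∃ T : Finset (Set G), ↑T ⊆ πr r ∧
        (∀ A ∈ T, (A ∩ (y • gball nm 1 r)).Nonempty) ∧
        ∀ f : G → ℂ, (y • gball nm 1 r).indicator f
          = ∑ A ∈ T, (A ∩ (y • gball nm 1 r)).indicator f) := by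
    intro r hr
    obtain ⟨hπc, hπm, hπd, hπu, hπx⟩ := hπr r hr
    choose! c hc1 hc2 hc3 using hπx
    have hs : 0 < r/(4*γ^2) := by positivity
    have hr2 : 0 < r/(2*γ) := by positivity
    have h2γr : 0 < 2*γ*r := by positivity
    have hkey : ∀ u v w : G, nm (u⁻¹ * w) ≤ γ * (nm (u⁻¹ * v) + nm (v⁻¹ * w)) := by
      intro u v w
      have h := hnm_mul (u⁻¹ * v) (v⁻¹ * w)
      rwa [show (u⁻¹ * v) * (v⁻¹ * w) = u⁻¹ * w by group] at h
    have hV : ∀ A ∈ πr r, ∀ z ∈ A, nm ((c A)⁻¹ * z) < r/(2*γ) := by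
      intro A hA z hz
      have hzV := hc3 A hA hz
      rw [Set.mem_smul_set_iff_inv_smul_mem] at hzV
      rw [Set.mem_mul] at hzV
      obtain ⟨u, hu, v, hv, huv⟩ := hzV
      have hu' : nm u < r/(4*γ^2) := by simpa [gball] using hu
      have hv' : nm v < r/(4*γ^2) := by simpa [gball] using hv
      have h := hnm_mul u v
      rw [huv] at h
      calc nm ((c A)⁻¹ * z) ≤ γ * (nm u + nm v) := by simpa [smul_eq_mul] using h
      _ < γ * (r/(4*γ^2) + r/(4*γ^2)) :=
        mul_lt_mul_of_pos_left (add_lt_add hu' hv') hγ0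
      _ = r/(2*γ) := by field_simp; ring
    have hflip : ∀ u v : G, nm (u⁻¹ * v) = nm (v⁻¹ * u) := by
      intro u v
      rw [show u⁻¹ * v = (v⁻¹ * u)⁻¹ by group, hnm_inv]
    have hI2 : ∀ A ∈ πr r, ∀ y : G, y ∈ c A • gball nm 1 (r/(2*γ)) →
        A ⊆ y • gball nm 1 r := by
      intro A hA y hy a ha
      have h1 : nm ((c A)⁻¹ * a) < r/(2*γ) := hV A hA a ha
      have h2 : nm ((c A)⁻¹ * y) < r/(2*γ) := mem_smul_gball.mp hy
      rw [mem_smul_gball]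
      calc nm (y⁻¹ * a) ≤ γ * (nm (y⁻¹ * c A) + nm ((c A)⁻¹ * a)) := hkey y (c A) a
      _ < γ * (r/(2*γ) + r/(2*γ)) := by
        refine mul_lt_mul_of_pos_left (add_lt_add ?_ h1) hγ0
        rwa [hflip y (c A)]
      _ = r := by field_simp; ring
    have hI1 : ∀ (y : G), ∀ A ∈ πr r, (A ∩ (y • gball nm 1 r)).Nonempty →
        A ⊆ y • gball nm 1 (2*γ*r) := by
      rintro y A hA ⟨z, hzA, hzy⟩ a ha
      have h1 : nm (y⁻¹ * z) < r := mem_smul_gball.mp hzy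
      have h2 : nm (z⁻¹ * a) < r := by
        calc nm (z⁻¹ * a) ≤ γ * (nm (z⁻¹ * c A) + nm ((c A)⁻¹ * a)) := hkey z (c A) a
        _ < γ * (r/(2*γ) + r/(2*γ)) := by
          refine mul_lt_mul_of_pos_left (add_lt_add ?_ (hV A hA a ha)) hγ0
          rw [hflip z (c A)]
          exact hV A hA z hzA
        _ = r := by field_simp; ring
      rw [mem_smul_gball]
      calc nm (y⁻¹ * a) ≤ γ * (nm (y⁻¹ * z) + nm (z⁻¹ * a)) := hkey y z a
      _ < γ * (r + r) := mul_lt_mul_of_pos_left (add_lt_add h1 h2) hγ0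
      _ = 2*γ*r := by ring
    have hI3 : ∀ A ∈ πr r, ∀ y : G, (A ∩ (y • gball nm 1 r)).Nonempty →
        y ∈ c A • gball nm 1 (2*γ*r) := by
      rintro A hA y ⟨z, hzA, hzy⟩
      have h1 : nm (y⁻¹ * z) < r := mem_smul_gball.mp hzy
      have h3 : nm ((c A)⁻¹ * z) < r/(2*γ) := hV A hA z hzA
      have h5 : r/(2*γ) ≤ r := by
        rw [div_le_iff₀ (by positivity)]
        nlinarith
      rw [mem_smul_gball, hflip (c A) y]
      calc nm (y⁻¹ * c A) ≤ γ * (nm (y⁻¹ * z) + nm (z⁻¹ * c A)) := hkey y z (c A)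
      _ < γ * (r + r) := by
        refine mul_lt_mul_of_pos_left (add_lt_add_of_lt_of_le h1 ?_) hγ0
        rw [hflip z (c A)]
        exact h3.le.trans h5
      _ = 2*γ*r := by ring
    have hcnt : ∀ (y : G) (T : Finset (Set G)), ↑T ⊆ πr r →
        (∀ A ∈ T, (A ∩ (y • gball nm 1 r)).Nonempty) → T.card ≤ N := by
      intro y T hTπ hTy
      have hsub : ∀ A ∈ T, A ⊆ y • gball nm 1 (2*γ*r) :=
        fun A hA => hI1 y A (hTπ hA) (hTy A hA)
      have hdisj : (↑T : Set (Set G)).PairwiseDisjoint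
          (fun A => c A • gball nm 1 (r/(4*γ^2))) := by
        intro A hA A' hA' hne
        exact (hπd (hTπ hA) (hTπ hA') hne).mono (hc2 A (hTπ hA)) (hc2 A' (hTπ hA'))
      have hmeas : ∀ A ∈ T, MeasurableSet (c A • gball nm 1 (r/(4*γ^2))) :=
        fun A _ => ((isOpen_gball hnm_cont 1 _).smul (c A)).measurableSet
      have key : (T.card : ℝ≥0∞) * ENNReal.ofReal ((r/(4*γ^2))^ρ)
          ≤ ENNReal.ofReal ((2*γ*r)^ρ) := by
        calc (T.card : ℝ≥0∞) * ENNReal.ofReal ((r/(4*γ^2))^ρ)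
            = ∑ A ∈ T, μ (c A • gball nm 1 (r/(4*γ^2))) := by
              rw [Finset.sum_congr rfl
                (fun A _ => by rw [measure_smul μ (c A), hvol _ hs]),
                Finset.sum_const, nsmul_eq_mul]
        _ = μ (⋃ A ∈ T, c A • gball nm 1 (r/(4*γ^2))) :=
              (measure_biUnion_finset hdisj hmeas).symm
        _ ≤ μ (y • gball nm 1 (2*γ*r)) := measure_mono
              (Set.iUnion₂_subset fun A hA => (hc2 A (hTπ hA)).trans (hsub A hA))
        _ = ENNReal.ofReal ((2*γ*r)^ρ) := by rw [measure_smul μ y, hvol _ h2γr]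
      have hpos : (0:ℝ) < (r/(4*γ^2))^ρ := Real.rpow_pos_of_pos hs ρ
      have hcard : (T.card : ℝ) ≤ (8*γ^3)^ρ := by
        have h1 : (T.card : ℝ≥0∞) ≤ ENNReal.ofReal ((2*γ*r)^ρ) /
            ENNReal.ofReal ((r/(4*γ^2))^ρ) :=
          (ENNReal.le_div_iff_mul_le (Or.inl (by simp [hpos]))
            (Or.inl ENNReal.ofReal_ne_top)).mpr key
        rw [← ENNReal.ofReal_div_of_pos hpos] at h1
        have h2 : (2*γ*r)^ρ / (r/(4*γ^2))^ρ = (8*γ^3)^ρ := by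
          rw [← Real.div_rpow (by positivity) hs.le]
          congr 1
          field_simp
          ring
        rw [h2, ← ENNReal.ofReal_natCast] at h1
        exact (ENNReal.ofReal_le_ofReal_iff (by positivity)).mp h1
      exact_mod_cast hcard.trans (Nat.le_ceil _)
    refine ⟨c, hc1, hI2, hI3, hcnt, ?_⟩
    intro y
    set S : Set (Set G) := {A | A ∈ πr r ∧ (A ∩ (y • gball nm 1 r)).Nonempty} with hSdef
    have hSfin : S.Finite := by
      by_contra hinf
      obtain ⟨T, hTS, hTcard⟩ := Set.Infinite.exists_subset_card_eq hinf (N+1)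
      have := hcnt y T (fun A hA => (hTS (Finset.mem_coe.mpr hA)).1)
        (fun A hA => (hTS (Finset.mem_coe.mpr hA)).2)
      omega
    refine ⟨hSfin.toFinset, ?_, ?_, ?_⟩
    · intro A hA
      exact (hSfin.mem_toFinset.mp hA).1
    · intro A hA
      exact (hSfin.mem_toFinset.mp hA).2
    · intro f
      funext x
      rw [Finset.sum_apply]
      by_cases hx : x ∈ y • gball nm 1 r
      · obtain ⟨A₀, hA₀π, hxA₀⟩ := (Set.sUnion_eq_univ_iff.mp hπu) x
        have hA₀T : A₀ ∈ hSfin.toFinset := hSfin.mem_toFinset.mpr ⟨hA₀π, ⟨x, hxA₀, hx⟩⟩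
        have hz : ∀ A ∈ hSfin.toFinset, A ≠ A₀ →
            (A ∩ (y • gball nm 1 r)).indicator f x = 0 := by
          intro A hA hne
          refine Set.indicator_of_notMem (fun hxA => ?_) f
          have hd := hπd (hSfin.mem_toFinset.mp hA).1 hA₀π hne
          exact Set.disjoint_left.mp hd hxA.1 hxA₀
        have hmem : x ∈ A₀ ∩ (y • gball nm 1 r) := ⟨hxA₀, hx⟩
        rw [Set.indicator_of_mem hx, Finset.sum_eq_single_of_mem A₀ hA₀T hz,
          Set.indicator_of_mem hmem]
      · rw [Set.indicator_of_notMem hx]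
        refine (Finset.sum_eq_zero fun A _ => ?_).symm
        exact Set.indicator_of_notMem (fun hxA => hx hxA.2) f
  by_cases hp : p = ∞
  · -- p = ∞
    refine ⟨1, (N : ℝ≥0), one_pos, Nat.cast_pos.mpr (by omega), ?_⟩
    intro r hr f hf hfin
    obtain ⟨c, hc1, hI2, hI3, hcnt, hcov⟩ := hmain r hr
    obtain ⟨hπc, hπm, hπd, hπu, -⟩ := hπr r hr
    have hr2 : 0 < r/(2*γ) := by positivity
    rw [if_pos hp]
    simp only [blockNorm, partNorm, if_pos hp, ENNReal.coe_one, one_mul,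
      ENNReal.coe_natCast]
    constructor
    · refine iSup₂_le fun A hA => ?_
      by_contra hlt
      push_neg at hlt
      have hae := ae_lt_of_essSup_lt hlt
      have hsub : c A • gball nm 1 (r/(2*γ)) ⊆
          {y | ¬ (eLpNorm ((y • gball nm 1 r).indicator f) q μ <
            eLpNorm (A.indicator f) q μ)} := by
        intro y hy
        exact not_lt.mpr (eLpNorm_indicator_mono' f (hI2 A hA y hy))
      have h0 : μ (c A • gball nm 1 (r/(2*γ))) = 0 :=
        measure_mono_null hsub (by rwa [ae_iff] at hae)
      rw [measure_smul μ (c A), hvol _ hr2] at h0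
      rw [ENNReal.ofReal_eq_zero] at h0
      have := Real.rpow_pos_of_pos hr2 ρ
      linarith
    · refine essSup_le_of_ae_le _ (Filter.Eventually.of_forall fun y => ?_)
      obtain ⟨T, hTπ, hTy, hTfun⟩ := hcov y
      have hTcard := hcnt y T hTπ hTy
      calc eLpNorm ((y • gball nm 1 r).indicator f) q μ
          = eLpNorm (∑ A ∈ T, (A ∩ (y • gball nm 1 r)).indicator f) q μ := by rw [hTfun f]
      _ ≤ ∑ A ∈ T, eLpNorm ((A ∩ (y • gball nm 1 r)).indicator f) q μ :=
          eLpNorm_sum_le (fun A hA => hf.indicator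
            ((hπm A (hTπ (Finset.mem_coe.mpr hA))).inter
              ((isOpen_gball hnm_cont 1 r).smul y).measurableSet)) hq1
      _ ≤ ∑ _A ∈ T, ⨆ A' ∈ πr r, eLpNorm ((A' : Set G).indicator f) q μ := by
          refine Finset.sum_le_sum fun A hA => ?_
          refine le_trans (eLpNorm_indicator_mono' f Set.inter_subset_left) ?_
          exact le_iSup₂ (f := fun A' (_ : A' ∈ πr r) => eLpNorm (A'.indicator f) q μ)
            A (hTπ (Finset.mem_coe.mpr hA))
      _ = T.card • (⨆ A' ∈ πr r, eLpNorm ((A' : Set G).indicator f) q μ) :=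
          Finset.sum_const _
      _ ≤ (N : ℝ≥0∞) * ⨆ A' ∈ πr r, eLpNorm ((A' : Set G).indicator f) q μ := by
          rw [nsmul_eq_mul]
          exact mul_le_mul_left (by exact_mod_cast hTcard) _
  · -- p < ∞
    have hp0 : p ≠ 0 := (lt_of_lt_of_le zero_lt_one hp1).ne'
    have hpt0 : 0 < p.toReal := ENNReal.toReal_pos hp0 hp
    have h2γ : (0:ℝ) < 2*γ := by positivity
    have hNtop : (N:ℝ≥0∞) ≠ ∞ := ENNReal.natCast_ne_top N
    have hE₁0 : ((N:ℝ≥0∞))⁻¹ * ENNReal.ofReal (((2*γ)^ρ)⁻¹) ≠ 0 := by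
      apply mul_ne_zero
      · simp [hNtop]
      · rw [ne_eq, ENNReal.ofReal_eq_zero, not_le]
        positivity
    have hE₁top : ((N:ℝ≥0∞))⁻¹ * ENNReal.ofReal (((2*γ)^ρ)⁻¹) ≠ ∞ :=
      ENNReal.mul_ne_top (by simp [hNne0]) ENNReal.ofReal_ne_top
    obtain ⟨C₁, hC₁pos, hC₁⟩ := exists_nnreal_rpow' _ hE₁0 hE₁top hpt0
    have hE₂0 : (N:ℝ≥0∞)^p.toReal * ENNReal.ofReal ((2*γ)^ρ) ≠ 0 := by
      apply mul_ne_zero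
      · simp [ENNReal.rpow_eq_zero_iff, hNne0, hNtop, hpt0.le]
      · rw [ne_eq, ENNReal.ofReal_eq_zero, not_le]
        positivity
    have hE₂top : (N:ℝ≥0∞)^p.toReal * ENNReal.ofReal ((2*γ)^ρ) ≠ ∞ :=
      ENNReal.mul_ne_top (ENNReal.rpow_ne_top_of_nonneg hpt0.le hNtop)
        ENNReal.ofReal_ne_top
    obtain ⟨C₂, hC₂pos, hC₂⟩ := exists_nnreal_rpow' _ hE₂0 hE₂top hpt0
    refine ⟨C₁, C₂, hC₁pos, hC₂pos, ?_⟩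
    intro r hr f hf hfin
    obtain ⟨c, hc1, hI2, hI3, hcnt, hcov⟩ := hmain r hr
    obtain ⟨hπc, hπm, hπd, hπu, -⟩ := hπr r hr
    haveI : Countable ↥(πr r) := hπc.to_subtype
    have hr2 : 0 < r/(2*γ) := by positivity
    have h2γr : 0 < 2*γ*r := by positivity
    have hmeasin : ∀ A : Set G, MeasurableSet (c A • gball nm 1 (r/(2*γ))) :=
      fun A => ((isOpen_gball hnm_cont 1 _).smul (c A)).measurableSet
    have hmeasout : ∀ A : Set G, MeasurableSet (c A • gball nm 1 (2*γ*r)) :=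
      fun A => ((isOpen_gball hnm_cont 1 _).smul (c A)).measurableSet
    -- pointwise upper bound
    have pointwise1 : ∀ y : G,
        eLpNorm ((y • gball nm 1 r).indicator f) q μ ^ p.toReal ≤ (N:ℝ≥0∞) ^ p.toReal *
          ∑' (A : ↥(πr r)), (c (↑A) • gball nm 1 (2*γ*r)).indicator
            (fun _ => eLpNorm ((A : Set G).indicator f) q μ ^ p.toReal) y := by
      intro y
      obtain ⟨T, hTπ, hTy, hTfun⟩ := hcov y
      have hTcard := hcnt y T hTπ hTy
      have h1 : eLpNorm ((y • gball nm 1 r).indicator f) q μ ≤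
          ∑ A ∈ T, eLpNorm (A.indicator f) q μ := by
        calc eLpNorm ((y • gball nm 1 r).indicator f) q μ
            = eLpNorm (∑ A ∈ T, (A ∩ (y • gball nm 1 r)).indicator f) q μ := by
              rw [hTfun f]
        _ ≤ ∑ A ∈ T, eLpNorm ((A ∩ (y • gball nm 1 r)).indicator f) q μ :=
            eLpNorm_sum_le (fun A hA => hf.indicator
              ((hπm A (hTπ (Finset.mem_coe.mpr hA))).inter
                ((isOpen_gball hnm_cont 1 r).smul y).measurableSet)) hq1
        _ ≤ _ := Finset.sum_le_sum fun A _ =>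
            eLpNorm_indicator_mono' f Set.inter_subset_left
      have h2 : ∀ A ∈ T, eLpNorm (A.indicator f) q μ ≤
          (∑ A' ∈ T, eLpNorm (A'.indicator f) q μ ^ p.toReal) ^ (1/p.toReal) := by
        intro A hA
        have hle : eLpNorm (A.indicator f) q μ ^ p.toReal ≤
            ∑ A' ∈ T, eLpNorm (A'.indicator f) q μ ^ p.toReal :=
          Finset.single_le_sum
            (f := fun A' : Set G => eLpNorm (A'.indicator f) q μ ^ p.toReal)
            (fun _ _ => zero_le) hA
        calc eLpNorm (A.indicator f) q μ
            = (eLpNorm (A.indicator f) q μ ^ p.toReal) ^ (1/p.toReal) := by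
              rw [← ENNReal.rpow_mul, mul_one_div_cancel hpt0.ne', ENNReal.rpow_one]
        _ ≤ _ := ENNReal.rpow_le_rpow hle (by positivity)
      have h3 : eLpNorm ((y • gball nm 1 r).indicator f) q μ ≤
          (N:ℝ≥0∞) * (∑ A' ∈ T, eLpNorm (A'.indicator f) q μ ^ p.toReal) ^ (1/p.toReal) := by
        refine h1.trans ((Finset.sum_le_card_nsmul T _ _ h2).trans ?_)
        rw [nsmul_eq_mul]
        exact mul_le_mul_left (by exact_mod_cast hTcard) _
      have h4 : eLpNorm ((y • gball nm 1 r).indicator f) q μ ^ p.toReal ≤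
          (N:ℝ≥0∞) ^ p.toReal * ∑ A' ∈ T, eLpNorm (A'.indicator f) q μ ^ p.toReal := by
        calc eLpNorm ((y • gball nm 1 r).indicator f) q μ ^ p.toReal
            ≤ ((N:ℝ≥0∞) * (∑ A' ∈ T, eLpNorm (A'.indicator f) q μ ^ p.toReal) ^
              (1/p.toReal)) ^ p.toReal := ENNReal.rpow_le_rpow h3 hpt0.le
        _ = _ := by
            rw [ENNReal.mul_rpow_of_nonneg _ _ hpt0.le, ← ENNReal.rpow_mul,
              one_div_mul_cancel hpt0.ne', ENNReal.rpow_one]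
      refine h4.trans (mul_le_mul_right ?_ _)
      have heq : ∀ A ∈ T, eLpNorm (A.indicator f) q μ ^ p.toReal =
          (πr r).indicator (fun A' => (c A' • gball nm 1 (2*γ*r)).indicator
            (fun _ => eLpNorm (A'.indicator f) q μ ^ p.toReal) y) A := by
        intro A hA
        rw [Set.indicator_of_mem (hTπ (Finset.mem_coe.mpr hA)),
          Set.indicator_of_mem (hI3 A (hTπ (Finset.mem_coe.mpr hA)) y (hTy A hA))]
      calc ∑ A' ∈ T, eLpNorm (A'.indicator f) q μ ^ p.toReal
          = ∑ A ∈ T, (πr r).indicator (fun A' => (c A' • gball nm 1 (2*γ*r)).indicator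
              (fun _ => eLpNorm (A'.indicator f) q μ ^ p.toReal) y) A :=
            Finset.sum_congr rfl heq
      _ ≤ ∑' (A : Set G), (πr r).indicator (fun A' =>
            (c A' • gball nm 1 (2*γ*r)).indicator
              (fun _ => eLpNorm (A'.indicator f) q μ ^ p.toReal) y) A :=
            ENNReal.sum_le_tsum T
      _ = _ := (tsum_subtype _ _).symm
    have EST1 : (∫⁻ y, eLpNorm ((y • gball nm 1 r).indicator f) q μ ^ p.toReal ∂μ)
        ≤ (N:ℝ≥0∞)^p.toReal * (ENNReal.ofReal ((2*γ*r)^ρ) *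
          ∑' (A : ↥(πr r)), eLpNorm ((A:Set G).indicator f) q μ ^ p.toReal) := by
      calc (∫⁻ y, eLpNorm ((y • gball nm 1 r).indicator f) q μ ^ p.toReal ∂μ)
          ≤ ∫⁻ y, (N:ℝ≥0∞)^p.toReal * ∑' (A : ↥(πr r)),
              (c (↑A) • gball nm 1 (2*γ*r)).indicator
                (fun _ => eLpNorm ((A : Set G).indicator f) q μ ^ p.toReal) y ∂μ :=
            lintegral_mono pointwise1
      _ = (N:ℝ≥0∞)^p.toReal * ∫⁻ y, ∑' (A : ↥(πr r)),
              (c (↑A) • gball nm 1 (2*γ*r)).indicator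
                (fun _ => eLpNorm ((A : Set G).indicator f) q μ ^ p.toReal) y ∂μ :=
            lintegral_const_mul' _ _ (ENNReal.rpow_ne_top_of_nonneg hpt0.le hNtop)
      _ = (N:ℝ≥0∞)^p.toReal * ∑' (A : ↥(πr r)), ∫⁻ y,
              (c (↑A) • gball nm 1 (2*γ*r)).indicator
                (fun _ => eLpNorm ((A : Set G).indicator f) q μ ^ p.toReal) y ∂μ := by
            rw [lintegral_tsum (fun (A : ↥(πr r)) => (measurable_const.indicator (hmeasout ↑A)).aemeasurable)]
      _ = _ := by
            congr 1
            rw [← ENNReal.tsum_mul_left]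
            refine tsum_congr fun A => ?_
            rw [lintegral_indicator_const (hmeasout ↑A), measure_smul μ (c ↑A),
              hvol _ h2γr, mul_comm]
    -- pointwise lower bound
    have pointwise2 : ∀ y : G,
        (∑' (A : ↥(πr r)), (c (↑A) • gball nm 1 (r/(2*γ))).indicator
          (fun _ => eLpNorm ((A:Set G).indicator f) q μ ^ p.toReal) y)
        ≤ (N:ℝ≥0∞) * eLpNorm ((y • gball nm 1 r).indicator f) q μ ^ p.toReal := by
      intro y
      have hterm : ∀ A : ↥(πr r), (c (↑A) • gball nm 1 (r/(2*γ))).indicator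
          (fun _ => eLpNorm ((A:Set G).indicator f) q μ ^ p.toReal) y ≤
          (c (↑A) • gball nm 1 (r/(2*γ))).indicator
            (fun _ => eLpNorm ((y • gball nm 1 r).indicator f) q μ ^ p.toReal) y := by
        intro A
        by_cases hy : y ∈ c (↑A) • gball nm 1 (r/(2*γ))
        · rw [Set.indicator_of_mem hy, Set.indicator_of_mem hy]
          exact ENNReal.rpow_le_rpow
            (eLpNorm_indicator_mono' f (hI2 ↑A A.2 y hy)) hpt0.le
        · rw [Set.indicator_of_notMem hy, Set.indicator_of_notMem hy]
      have hcount : (∑' (A : ↥(πr r)), (c (↑A) • gball nm 1 (r/(2*γ))).indicator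
          (fun _ => (1:ℝ≥0∞)) y) ≤ (N:ℝ≥0∞) := by
        rw [ENNReal.tsum_eq_iSup_sum]
        refine iSup_le fun s => ?_
        have hstep : ∑ A ∈ s, (c (↑A) • gball nm 1 (r/(2*γ))).indicator
            (fun _ => (1:ℝ≥0∞)) y =
            ((s.filter (fun A : ↥(πr r) => y ∈ c (↑A) • gball nm 1 (r/(2*γ)))).card : ℝ≥0∞) := by
          rw [← Finset.sum_boole]
          refine Finset.sum_congr rfl fun A _ => ?_
          exact Set.indicator_apply _ _ _
        rw [hstep]
        set t : Finset (Set G) :=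
          (s.filter (fun A : ↥(πr r) => y ∈ c (↑A) • gball nm 1 (r/(2*γ)))).image
            (fun A : ↥(πr r) => (A : Set G)) with ht
        have htcard : t.card =
            (s.filter (fun A : ↥(πr r) => y ∈ c (↑A) • gball nm 1 (r/(2*γ)))).card :=
          Finset.card_image_of_injective _ Subtype.coe_injective
        have hcle : t.card ≤ N := by
          refine hcnt y t ?_ ?_
          · intro A hA
            rw [Finset.mem_coe, ht, Finset.mem_image] at hA
            obtain ⟨A', _, rfl⟩ := hA
            exact A'.2
          · intro A hA
            rw [ht, Finset.mem_image] at hA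
            obtain ⟨A', hA', rfl⟩ := hA
            have hy := (Finset.mem_filter.mp hA').2
            exact ⟨c ↑A', hc1 ↑A' A'.2, hI2 ↑A' A'.2 y hy (hc1 ↑A' A'.2)⟩
        rw [← htcard]
        exact_mod_cast hcle
      calc (∑' (A : ↥(πr r)), (c (↑A) • gball nm 1 (r/(2*γ))).indicator
            (fun _ => eLpNorm ((A:Set G).indicator f) q μ ^ p.toReal) y)
          ≤ ∑' (A : ↥(πr r)), (c (↑A) • gball nm 1 (r/(2*γ))).indicator
            (fun _ => eLpNorm ((y • gball nm 1 r).indicator f) q μ ^ p.toReal) y :=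
          ENNReal.tsum_le_tsum hterm
      _ = eLpNorm ((y • gball nm 1 r).indicator f) q μ ^ p.toReal *
          ∑' (A : ↥(πr r)), (c (↑A) • gball nm 1 (r/(2*γ))).indicator
            (fun _ => (1:ℝ≥0∞)) y := by
          rw [← ENNReal.tsum_mul_left]
          refine tsum_congr fun A => ?_
          by_cases hy : y ∈ c (↑A) • gball nm 1 (r/(2*γ)) <;>
            simp [Set.indicator_of_mem, Set.indicator_of_notMem, hy]
      _ ≤ eLpNorm ((y • gball nm 1 r).indicator f) q μ ^ p.toReal * (N:ℝ≥0∞) :=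
          mul_le_mul_right hcount _
      _ = _ := mul_comm _ _
    have EST2 : ENNReal.ofReal ((r/(2*γ))^ρ) *
        (∑' (A : ↥(πr r)), eLpNorm ((A:Set G).indicator f) q μ ^ p.toReal) ≤
        (N:ℝ≥0∞) * ∫⁻ y, eLpNorm ((y • gball nm 1 r).indicator f) q μ ^ p.toReal ∂μ := by
      have hcalc : (∫⁻ y, (∑' (A : ↥(πr r)),
          (c (↑A) • gball nm 1 (r/(2*γ))).indicator
            (fun _ => eLpNorm ((A:Set G).indicator f) q μ ^ p.toReal) y) ∂μ) =
          ENNReal.ofReal ((r/(2*γ))^ρ) *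
            ∑' (A : ↥(πr r)), eLpNorm ((A:Set G).indicator f) q μ ^ p.toReal := by
        rw [lintegral_tsum (fun (A : ↥(πr r)) => (measurable_const.indicator (hmeasin ↑A)).aemeasurable),
          ← ENNReal.tsum_mul_left]
        refine tsum_congr fun A => ?_
        rw [lintegral_indicator_const (hmeasin ↑A), measure_smul μ (c ↑A),
          hvol _ hr2, mul_comm]
      calc ENNReal.ofReal ((r/(2*γ))^ρ) *
          (∑' (A : ↥(πr r)), eLpNorm ((A:Set G).indicator f) q μ ^ p.toReal)
          = ∫⁻ y, (∑' (A : ↥(πr r)), (c (↑A) • gball nm 1 (r/(2*γ))).indicator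
              (fun _ => eLpNorm ((A:Set G).indicator f) q μ ^ p.toReal) y) ∂μ := hcalc.symm
      _ ≤ ∫⁻ y, (N:ℝ≥0∞) *
            eLpNorm ((y • gball nm 1 r).indicator f) q μ ^ p.toReal ∂μ :=
          lintegral_mono pointwise2
      _ = (N:ℝ≥0∞) * ∫⁻ y, eLpNorm ((y • gball nm 1 r).indicator f) q μ ^ p.toReal ∂μ :=
          lintegral_const_mul' _ _ hNtop
    -- assembly
    have hRne0 : ENNReal.ofReal (r^ρ) ≠ 0 := by
      rw [ne_eq, ENNReal.ofReal_eq_zero, not_le]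
      positivity
    have hRtop : ENNReal.ofReal (r^ρ) ≠ ∞ := ENNReal.ofReal_ne_top
    have hR1 : (ENNReal.ofReal (r^ρ))⁻¹ * ENNReal.ofReal (r^ρ) = 1 :=
      ENNReal.inv_mul_cancel hRne0 hRtop
    have hN1' : (N:ℝ≥0∞)⁻¹ * (N:ℝ≥0∞) = 1 := ENNReal.inv_mul_cancel hNne0 hNtop
    have hwpow : (ENNReal.ofReal r ^ (-(ρ / p.toReal))) ^ p.toReal =
        (ENNReal.ofReal (r^ρ))⁻¹ := by
      rw [← ENNReal.rpow_mul]
      rw [show -(ρ / p.toReal) * p.toReal = -ρ by field_simp]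
      rw [ENNReal.rpow_neg, ENNReal.ofReal_rpow_of_pos hr]
    have hsplit : ENNReal.ofReal ((r/(2*γ))^ρ) =
        ENNReal.ofReal (r^ρ) * ENNReal.ofReal (((2*γ)^ρ)⁻¹) := by
      rw [← ENNReal.ofReal_mul (by positivity)]
      congr 1
      rw [Real.div_rpow hr.le h2γ.le, div_eq_mul_inv]
    have hsplit2 : ENNReal.ofReal ((2*γ*r)^ρ) =
        ENNReal.ofReal ((2*γ)^ρ) * ENNReal.ofReal (r^ρ) := by
      rw [← ENNReal.ofReal_mul (by positivity), ← Real.mul_rpow h2γ.le hr.le]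
    rw [if_neg hp]
    simp only [blockNorm, partNorm, if_neg hp]
    have KEY1 : ((N:ℝ≥0∞)⁻¹ * ENNReal.ofReal (((2*γ)^ρ)⁻¹)) *
        (∑' (A : ↥(πr r)), eLpNorm ((A:Set G).indicator f) q μ ^ p.toReal) ≤
        (ENNReal.ofReal (r^ρ))⁻¹ *
          ∫⁻ y, eLpNorm ((y • gball nm 1 r).indicator f) q μ ^ p.toReal ∂μ := by
      calc ((N:ℝ≥0∞)⁻¹ * ENNReal.ofReal (((2*γ)^ρ)⁻¹)) *
          (∑' (A : ↥(πr r)), eLpNorm ((A:Set G).indicator f) q μ ^ p.toReal)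
          = (ENNReal.ofReal (r^ρ))⁻¹ * ((N:ℝ≥0∞)⁻¹ *
            (ENNReal.ofReal ((r/(2*γ))^ρ) *
              (∑' (A : ↥(πr r)), eLpNorm ((A:Set G).indicator f) q μ ^ p.toReal))) := by
            rw [hsplit, ← one_mul ((N:ℝ≥0∞)⁻¹ * _), ← hR1]
            ring
      _ ≤ (ENNReal.ofReal (r^ρ))⁻¹ * ((N:ℝ≥0∞)⁻¹ * ((N:ℝ≥0∞) *
            ∫⁻ y, eLpNorm ((y • gball nm 1 r).indicator f) q μ ^ p.toReal ∂μ)) :=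
          mul_le_mul_right (mul_le_mul_right EST2 _) _
      _ = (ENNReal.ofReal (r^ρ))⁻¹ *
            ∫⁻ y, eLpNorm ((y • gball nm 1 r).indicator f) q μ ^ p.toReal ∂μ := by
          rw [← mul_assoc ((N:ℝ≥0∞))⁻¹, hN1', one_mul]
    have KEY2 : (ENNReal.ofReal (r^ρ))⁻¹ *
        (∫⁻ y, eLpNorm ((y • gball nm 1 r).indicator f) q μ ^ p.toReal ∂μ) ≤
        ((N:ℝ≥0∞)^p.toReal * ENNReal.ofReal ((2*γ)^ρ)) *
          ∑' (A : ↥(πr r)), eLpNorm ((A:Set G).indicator f) q μ ^ p.toReal := by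
      calc (ENNReal.ofReal (r^ρ))⁻¹ *
          (∫⁻ y, eLpNorm ((y • gball nm 1 r).indicator f) q μ ^ p.toReal ∂μ)
          ≤ (ENNReal.ofReal (r^ρ))⁻¹ * ((N:ℝ≥0∞)^p.toReal *
            (ENNReal.ofReal ((2*γ*r)^ρ) *
              ∑' (A : ↥(πr r)), eLpNorm ((A:Set G).indicator f) q μ ^ p.toReal)) :=
          mul_le_mul_right EST1 _
      _ = ((ENNReal.ofReal (r^ρ))⁻¹ * ENNReal.ofReal (r^ρ)) *
            (((N:ℝ≥0∞)^p.toReal * ENNReal.ofReal ((2*γ)^ρ)) *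
              ∑' (A : ↥(πr r)), eLpNorm ((A:Set G).indicator f) q μ ^ p.toReal) := by
          rw [hsplit2]
          ring
      _ = _ := by rw [hR1, one_mul]
    constructor
    · refine (ENNReal.rpow_le_rpow_iff hpt0).mp ?_
      calc ((C₁:ℝ≥0∞) * (∑' (A : ↥(πr r)),
            eLpNorm ((A:Set G).indicator f) q μ ^ p.toReal) ^ (1/p.toReal)) ^ p.toReal
          = (C₁:ℝ≥0∞) ^ p.toReal * (((∑' (A : ↥(πr r)),
              eLpNorm ((A:Set G).indicator f) q μ ^ p.toReal) ^ (1/p.toReal)) ^ p.toReal) :=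
            ENNReal.mul_rpow_of_nonneg _ _ hpt0.le
      _ = ((N:ℝ≥0∞)⁻¹ * ENNReal.ofReal (((2*γ)^ρ)⁻¹)) *
            (∑' (A : ↥(πr r)), eLpNorm ((A:Set G).indicator f) q μ ^ p.toReal) := by
          rw [hC₁, ← ENNReal.rpow_mul, one_div_mul_cancel hpt0.ne', ENNReal.rpow_one]
      _ ≤ (ENNReal.ofReal (r^ρ))⁻¹ *
            ∫⁻ y, eLpNorm ((y • gball nm 1 r).indicator f) q μ ^ p.toReal ∂μ := KEY1
      _ = (ENNReal.ofReal r ^ (-(ρ / p.toReal))) ^ p.toReal *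
            (((∫⁻ y, eLpNorm ((y • gball nm 1 r).indicator f) q μ ^ p.toReal ∂μ) ^
              (1/p.toReal)) ^ p.toReal) := by
          rw [hwpow, ← ENNReal.rpow_mul, one_div_mul_cancel hpt0.ne', ENNReal.rpow_one]
      _ = (ENNReal.ofReal r ^ (-(ρ / p.toReal)) *
            (∫⁻ y, eLpNorm ((y • gball nm 1 r).indicator f) q μ ^ p.toReal ∂μ) ^
              (1/p.toReal)) ^ p.toReal :=
          (ENNReal.mul_rpow_of_nonneg _ _ hpt0.le).symm
    · refine (ENNReal.rpow_le_rpow_iff hpt0).mp ?_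
      calc (ENNReal.ofReal r ^ (-(ρ / p.toReal)) *
            (∫⁻ y, eLpNorm ((y • gball nm 1 r).indicator f) q μ ^ p.toReal ∂μ) ^
              (1/p.toReal)) ^ p.toReal
          = (ENNReal.ofReal r ^ (-(ρ / p.toReal))) ^ p.toReal *
            (((∫⁻ y, eLpNorm ((y • gball nm 1 r).indicator f) q μ ^ p.toReal ∂μ) ^
              (1/p.toReal)) ^ p.toReal) :=
            ENNReal.mul_rpow_of_nonneg _ _ hpt0.le
      _ = (ENNReal.ofReal (r^ρ))⁻¹ *
            (∫⁻ y, eLpNorm ((y • gball nm 1 r).indicator f) q μ ^ p.toReal ∂μ) := by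
          rw [hwpow, ← ENNReal.rpow_mul, one_div_mul_cancel hpt0.ne', ENNReal.rpow_one]
      _ ≤ ((N:ℝ≥0∞)^p.toReal * ENNReal.ofReal ((2*γ)^ρ)) *
            ∑' (A : ↥(πr r)), eLpNorm ((A:Set G).indicator f) q μ ^ p.toReal := KEY2
      _ = (C₂:ℝ≥0∞) ^ p.toReal * (((∑' (A : ↥(πr r)),
            eLpNorm ((A:Set G).indicator f) q μ ^ p.toReal) ^ (1/p.toReal)) ^ p.toReal) := by
          rw [hC₂, ← ENNReal.rpow_mul, one_div_mul_cancel hpt0.ne', ENNReal.rpow_one]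
      _ = ((C₂:ℝ≥0∞) * (∑' (A : ↥(πr r)),
            eLpNorm ((A:Set G).indicator f) q μ ^ p.toReal) ^ (1/p.toReal)) ^ p.toReal :=
          (ENNReal.mul_rpow_of_nonneg _ _ hpt0.le).symm
end

section
/- For every (α,p,q) ∈ [1,∞]³, the set (L^q,L^p)^α(G) is a complex vector subspace of the space of measurable functions (mod λ-a.e. equality), the map f ↦ ‖f‖_{q,p,α} is a norm on it, and (L^q,L^p)^α(G) equipped with this norm is a complex Banach space (i.e. it is complete). -/
set_option linter.unusedSectionVars false
set_option linter.unnecessarySimpa false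
set_option maxHeartbeats 1000000


open MeasureTheory ENNReal NNReal Set Filter Topology Pointwise

variable {G : Type*} [Group G] [TopologicalSpace G] [IsTopologicalGroup G]
  [T2Space G] [LocallyCompactSpace G] [SigmaCompactSpace G]
  [MeasurableSpace G] [BorelSpace G]

lemma rpow_iSup' {ι : Sort*} (f : ι → ℝ≥0∞) {t : ℝ} (ht : 0 < t) :
    (⨆ i, f i) ^ t = ⨆ i, f i ^ t :=
  map_iSup (ENNReal.orderIsoRpow t ht) f

lemma rpow_liminf' (u : ℕ → ℝ≥0∞) {t : ℝ} (ht : 0 < t) :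
    (Filter.liminf u Filter.atTop) ^ t = Filter.liminf (fun n => u n ^ t) Filter.atTop :=
  (ENNReal.orderIsoRpow t ht).liminf_apply

lemma tsum_Lp_add_le' {ι : Type*} (u v : ι → ℝ≥0∞) {t : ℝ} (ht : 1 ≤ t) :
    (∑' i, (u i + v i) ^ t) ^ (1/t) ≤ (∑' i, u i ^ t) ^ (1/t) + (∑' i, v i ^ t) ^ (1/t) := by
  have ht0 : (0:ℝ) < t := lt_of_lt_of_le zero_lt_one ht
  rw [ENNReal.tsum_eq_iSup_sum, rpow_iSup' _ (by positivity : (0:ℝ) < 1/t)]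
  refine iSup_le fun s => ?_
  refine (ENNReal.Lp_add_le s u v ht).trans (add_le_add ?_ ?_) <;>
    exact ENNReal.rpow_le_rpow (ENNReal.sum_le_tsum s) (by positivity)

lemma liminf_add_liminf_le' (u v : ℕ → ℝ≥0∞) :
    Filter.liminf u Filter.atTop + Filter.liminf v Filter.atTop ≤
      Filter.liminf (fun k => u k + v k) Filter.atTop := by
  simp only [Filter.liminf_eq_iSup_iInf_of_nat]
  have hmono : ∀ w : ℕ → ℝ≥0∞, Monotone (fun n => ⨅ i ≥ n, w i) := by
    intro w n m hnm
    exact le_iInf₂ fun i hi => iInf₂_le i (hnm.trans hi)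
  rw [ENNReal.iSup_add_iSup (fun i j => ⟨max i j,
    add_le_add (hmono u (le_max_left i j)) (hmono v (le_max_right i j))⟩)]
  refine iSup_le fun n => le_trans ?_ (le_iSup _ n)
  exact le_iInf₂ fun i hi => add_le_add (iInf₂_le i hi) (iInf₂_le i hi)

lemma tsum_liminf_le' {ι : Type*} (u : ℕ → ι → ℝ≥0∞) :
    ∑' a, Filter.liminf (fun k => u k a) Filter.atTop ≤
      Filter.liminf (fun k => ∑' a, u k a) Filter.atTop := by
  rw [ENNReal.tsum_eq_iSup_sum]
  refine iSup_le fun s => ?_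
  refine le_trans ?_
    (Filter.liminf_le_liminf (Filter.Eventually.of_forall fun k => ENNReal.sum_le_tsum (f := u k) s))
  classical
  induction s using Finset.induction with
  | empty => simp
  | @insert a s h ih =>
      rw [Finset.sum_insert h]
      refine le_trans (add_le_add le_rfl ih) ?_
      refine (liminf_add_liminf_le' (fun k => u k a) (fun k => ∑ x ∈ s, u k x)).trans_eq ?_
      congr 1; funext k; simp [Finset.sum_insert h]

section PartLemmas

variable {G : Type*} [Group G] [TopologicalSpace G] [IsTopologicalGroup G]
  [T2Space G] [LocallyCompactSpace G] [SigmaCompactSpace G]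
  [MeasurableSpace G] [BorelSpace G]

variable {μ : Measure G} {q p : ℝ≥0∞} {π : Set (Set G)}

lemma toReal_pos_of_one_le {p : ℝ≥0∞} (hp1 : 1 ≤ p) (hp : p ≠ ∞) : 0 < p.toReal :=
  ENNReal.toReal_pos (zero_lt_one.trans_le hp1).ne' hp

lemma one_le_toReal_of_one_le {p : ℝ≥0∞} (hp1 : 1 ≤ p) (hp : p ≠ ∞) : 1 ≤ p.toReal := by
  rw [← ENNReal.toReal_one]
  exact ENNReal.toReal_mono hp hp1

lemma eLpNorm_le_partNorm (hp1 : 1 ≤ p) {A : Set G} (hA : A ∈ π) (f : G → ℂ) :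
    eLpNorm (A.indicator f) q μ ≤ partNorm μ q p π f := by
  unfold partNorm
  split_ifs with hp
  · exact le_iSup₂ (f := fun A (_ : A ∈ π) => eLpNorm (A.indicator f) q μ) A hA
  · have ht : 0 < p.toReal := toReal_pos_of_one_le hp1 hp
    have : eLpNorm (A.indicator f) q μ
        = (eLpNorm (A.indicator f) q μ ^ p.toReal) ^ (1 / p.toReal) := by
      rw [← ENNReal.rpow_mul, mul_one_div, div_self ht.ne', ENNReal.rpow_one]
    rw [this]
    exact ENNReal.rpow_le_rpow (ENNReal.le_tsum (⟨A, hA⟩ : π)) (by positivity)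

lemma partNorm_add_le (hq1 : 1 ≤ q) (hp1 : 1 ≤ p)
    (hmeas : ∀ A ∈ π, MeasurableSet A)
    {f g : G → ℂ} (hf : AEStronglyMeasurable f μ) (hg : AEStronglyMeasurable g μ) :
    partNorm μ q p π (f + g) ≤ partNorm μ q p π f + partNorm μ q p π g := by
  have key : ∀ A ∈ π, eLpNorm (A.indicator (f + g)) q μ
      ≤ eLpNorm (A.indicator f) q μ + eLpNorm (A.indicator g) q μ := by
    intro A hA
    rw [Set.indicator_add']
    exact eLpNorm_add_le (hf.indicator (hmeas A hA)) (hg.indicator (hmeas A hA)) hq1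
  unfold partNorm
  split_ifs with hp
  · refine iSup₂_le fun A hA => (key A hA).trans (add_le_add ?_ ?_) <;>
      exact le_iSup₂ (f := fun A (_ : A ∈ π) => eLpNorm (A.indicator _) q μ) A hA
  · have ht1 : 1 ≤ p.toReal := one_le_toReal_of_one_le hp1 hp
    have ht : (0:ℝ) < p.toReal := lt_of_lt_of_le zero_lt_one ht1
    calc (∑' A : π, eLpNorm ((A : Set G).indicator (f + g)) q μ ^ p.toReal) ^ (1 / p.toReal)
        ≤ (∑' A : π, (eLpNorm ((A : Set G).indicator f) q μ
            + eLpNorm ((A : Set G).indicator g) q μ) ^ p.toReal) ^ (1 / p.toReal) := by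
          refine ENNReal.rpow_le_rpow (ENNReal.tsum_le_tsum fun A => ?_) (by positivity)
          exact ENNReal.rpow_le_rpow (key A A.2) ht.le
      _ ≤ _ := tsum_Lp_add_le' _ _ ht1

lemma partNorm_smul (hp1 : 1 ≤ p) (c : ℂ) (f : G → ℂ) :
    partNorm μ q p π (c • f) = (‖c‖₊ : ℝ≥0∞) * partNorm μ q p π f := by
  have key : ∀ A : Set G, eLpNorm (A.indicator (c • f)) q μ
      = (‖c‖₊ : ℝ≥0∞) * eLpNorm (A.indicator f) q μ := by
    intro A
    rw [show A.indicator (c • f) = c • A.indicator f from Set.indicator_const_smul A c f,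
      eLpNorm_const_smul]
    rfl
  unfold partNorm
  split_ifs with hp
  · simp_rw [key, ENNReal.mul_iSup]
  · have ht : (0:ℝ) < p.toReal := toReal_pos_of_one_le hp1 hp
    simp_rw [key, ENNReal.mul_rpow_of_nonneg _ _ ht.le, ENNReal.tsum_mul_left,
      ENNReal.mul_rpow_of_nonneg _ _ (by positivity : (0:ℝ) ≤ 1 / p.toReal),
      ← ENNReal.rpow_mul, mul_one_div, div_self ht.ne', ENNReal.rpow_one]

lemma partNorm_eq_zero_of (hp1 : 1 ≤ p) {f : G → ℂ}
    (h : ∀ A ∈ π, eLpNorm (A.indicator f) q μ = 0) :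
    partNorm μ q p π f = 0 := by
  unfold partNorm
  split_ifs with hp
  · exact le_antisymm (iSup₂_le fun A hA => (h A hA).le) (zero_le)
  · have ht : (0:ℝ) < p.toReal := toReal_pos_of_one_le hp1 hp
    have : ∀ A : π, eLpNorm ((A : Set G).indicator f) q μ ^ p.toReal = 0 := fun A => by
      rw [h A A.2, ENNReal.zero_rpow_of_pos ht]
    simp only [this, tsum_zero, ENNReal.zero_rpow_of_pos (by positivity : (0:ℝ) < 1 / p.toReal)]

lemma partNorm_fatou (hp1 : 1 ≤ p) (hmeas : ∀ A ∈ π, MeasurableSet A)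
    {Fk : ℕ → G → ℂ} {g : G → ℂ}
    (hFk : ∀ k, AEStronglyMeasurable (Fk k) μ)
    (hlim : ∀ᵐ x ∂μ, Filter.Tendsto (fun k => Fk k x) Filter.atTop (nhds (g x))) :
    partNorm μ q p π g ≤
      Filter.liminf (fun k => partNorm μ q p π (Fk k)) Filter.atTop := by
  have key : ∀ A ∈ π, eLpNorm (A.indicator g) q μ
      ≤ Filter.liminf (fun k => eLpNorm (A.indicator (Fk k)) q μ) Filter.atTop := by
    intro A hA
    refine Lp.eLpNorm_lim_le_liminf_eLpNorm (fun k => (hFk k).indicator (hmeas A hA))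
      (A.indicator g) ?_
    refine hlim.mono fun x hx => ?_
    by_cases hxA : x ∈ A
    · simpa only [Set.indicator_of_mem hxA] using hx
    · simpa only [Set.indicator_of_notMem hxA] using tendsto_const_nhds
  unfold partNorm
  split_ifs with hp
  · refine iSup₂_le fun A hA => (key A hA).trans ?_
    refine Filter.liminf_le_liminf (Filter.Eventually.of_forall fun k => ?_)
    exact le_iSup₂ (f := fun A (_ : A ∈ π) => eLpNorm (A.indicator (Fk k)) q μ) A hA
  · have ht : (0:ℝ) < p.toReal := toReal_pos_of_one_le hp1 hp
    calc (∑' A : π, eLpNorm ((A : Set G).indicator g) q μ ^ p.toReal) ^ (1 / p.toReal)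
        ≤ (∑' A : π, (Filter.liminf
            (fun k => eLpNorm ((A : Set G).indicator (Fk k)) q μ) Filter.atTop) ^ p.toReal)
            ^ (1 / p.toReal) := by
          refine ENNReal.rpow_le_rpow (ENNReal.tsum_le_tsum fun A => ?_) (by positivity)
          exact ENNReal.rpow_le_rpow (key A A.2) ht.le
      _ = (∑' A : π, Filter.liminf
            (fun k => eLpNorm ((A : Set G).indicator (Fk k)) q μ ^ p.toReal) Filter.atTop)
            ^ (1 / p.toReal) := by
          congr 1
          exact tsum_congr fun A => rpow_liminf' _ ht
      _ ≤ (Filter.liminf (fun k => ∑' A : π,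
            eLpNorm ((A : Set G).indicator (Fk k)) q μ ^ p.toReal) Filter.atTop)
            ^ (1 / p.toReal) :=
          ENNReal.rpow_le_rpow (tsum_liminf_le' _) (by positivity)
      _ = Filter.liminf (fun k => (∑' A : π,
            eLpNorm ((A : Set G).indicator (Fk k)) q μ ^ p.toReal) ^ (1 / p.toReal))
            Filter.atTop :=
          rpow_liminf' _ (by positivity)

end PartLemmas

section AlphaLemmas

variable {G : Type*} [Group G] [TopologicalSpace G] [IsTopologicalGroup G]
  [T2Space G] [LocallyCompactSpace G] [SigmaCompactSpace G]
  [MeasurableSpace G] [BorelSpace G]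

variable (μ : Measure G) (nm : G → ℝ) (πr : ℝ → Set (Set G)) (q p α : ℝ≥0∞)

lemma term_le_alphaNorm {r : ℝ} (hr : 0 < r) (f : G → ℂ) :
    μ (gball nm 1 r) ^ (α⁻¹.toReal - q⁻¹.toReal) * partNorm μ q p (πr r) f
      ≤ alphaNorm μ nm πr q p α f :=
  le_iSup₂ (f := fun r (_ : 0 < r) =>
    μ (gball nm 1 r) ^ (α⁻¹.toReal - q⁻¹.toReal) * partNorm μ q p (πr r) f) r hr

lemma partNorm_one_le_alphaNorm {ρ : ℝ}
    (hvol : ∀ r : ℝ, 0 < r → μ (gball nm 1 r) = ENNReal.ofReal (r ^ ρ)) (f : G → ℂ) :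
    partNorm μ q p (πr 1) f ≤ alphaNorm μ nm πr q p α f := by
  have h1 : μ (gball nm 1 1) ^ (α⁻¹.toReal - q⁻¹.toReal) = 1 := by
    rw [hvol 1 one_pos, Real.one_rpow, ENNReal.ofReal_one, ENNReal.one_rpow]
  have := term_le_alphaNorm μ nm πr q p α one_pos f
  rwa [h1, one_mul] at this

lemma alphaNorm_add_le (hq1 : 1 ≤ q) (hp1 : 1 ≤ p)
    (hmeas : ∀ r : ℝ, 0 < r → ∀ A ∈ πr r, MeasurableSet A)
    {f g : G → ℂ} (hf : AEStronglyMeasurable f μ) (hg : AEStronglyMeasurable g μ) :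
    alphaNorm μ nm πr q p α (f + g)
      ≤ alphaNorm μ nm πr q p α f + alphaNorm μ nm πr q p α g := by
  rw [alphaNorm]
  refine iSup₂_le fun r hr => ?_
  calc μ (gball nm 1 r) ^ (α⁻¹.toReal - q⁻¹.toReal) * partNorm μ q p (πr r) (f + g)
      ≤ μ (gball nm 1 r) ^ (α⁻¹.toReal - q⁻¹.toReal)
          * (partNorm μ q p (πr r) f + partNorm μ q p (πr r) g) :=
        mul_le_mul_right (partNorm_add_le hq1 hp1 (hmeas r hr) hf hg) _
    _ = μ (gball nm 1 r) ^ (α⁻¹.toReal - q⁻¹.toReal) * partNorm μ q p (πr r) f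
          + μ (gball nm 1 r) ^ (α⁻¹.toReal - q⁻¹.toReal) * partNorm μ q p (πr r) g :=
        mul_add _ _ _
    _ ≤ _ := add_le_add (term_le_alphaNorm μ nm πr q p α hr f)
        (term_le_alphaNorm μ nm πr q p α hr g)

lemma alphaNorm_smul (hp1 : 1 ≤ p) (c : ℂ) (f : G → ℂ) :
    alphaNorm μ nm πr q p α (c • f) = (‖c‖₊ : ℝ≥0∞) * alphaNorm μ nm πr q p α f := by
  rw [alphaNorm, alphaNorm]
  simp_rw [partNorm_smul hp1 c f, mul_left_comm _ ((‖c‖₊ : ℝ≥0∞)), ← ENNReal.mul_iSup]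

lemma alphaNorm_fatou (hp1 : 1 ≤ p)
    (hmeas : ∀ r : ℝ, 0 < r → ∀ A ∈ πr r, MeasurableSet A)
    {Gk : ℕ → G → ℂ} {g : G → ℂ} (hGk : ∀ k, AEStronglyMeasurable (Gk k) μ)
    (hlim : ∀ᵐ x ∂μ, Filter.Tendsto (fun k => Gk k x) Filter.atTop (nhds (g x))) :
    alphaNorm μ nm πr q p α g
      ≤ Filter.liminf (fun k => alphaNorm μ nm πr q p α (Gk k)) Filter.atTop := by
  rw [alphaNorm]
  refine iSup₂_le fun r hr => ?_
  calc μ (gball nm 1 r) ^ (α⁻¹.toReal - q⁻¹.toReal) * partNorm μ q p (πr r) g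
      ≤ μ (gball nm 1 r) ^ (α⁻¹.toReal - q⁻¹.toReal)
          * Filter.liminf (fun k => partNorm μ q p (πr r) (Gk k)) Filter.atTop :=
        mul_le_mul_right (partNorm_fatou hp1 (hmeas r hr) hGk hlim) _
    _ ≤ Filter.liminf (fun k => μ (gball nm 1 r) ^ (α⁻¹.toReal - q⁻¹.toReal)
          * partNorm μ q p (πr r) (Gk k)) Filter.atTop := by
        have := ENNReal.le_liminf_mul (f := (Filter.atTop : Filter ℕ))
          (u := fun _ : ℕ => μ (gball nm 1 r) ^ (α⁻¹.toReal - q⁻¹.toReal))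
          (v := fun k => partNorm μ q p (πr r) (Gk k))
        rwa [Filter.liminf_const] at this
    _ ≤ _ := Filter.liminf_le_liminf (Filter.Eventually.of_forall fun k =>
        term_le_alphaNorm μ nm πr q p α hr (Gk k))

end AlphaLemmas

theorem statement5
    (μ : Measure G) [μ.IsHaarMeasure]
    (nm : G → ℝ) (γ ρ : ℝ)
    (hnm_cont : Continuous nm)
    (hnm_nonneg : ∀ x : G, 0 ≤ nm x)
    (hnm_zero : ∀ x : G, nm x = 0 ↔ x = 1)
    (hnm_inv : ∀ x : G, nm x⁻¹ = nm x)
    (hγ : 1 ≤ γ)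
    (hnm_mul : ∀ x y : G, nm (x * y) ≤ γ * (nm x + nm y))
    (hball_cpt : ∀ (x : G) (r : ℝ), 0 < r → IsCompact (closure (gball nm x r)))
    (hρ : 0 < ρ)
    (hvol : ∀ r : ℝ, 0 < r → μ (gball nm 1 r) = ENNReal.ofReal (r ^ ρ))
    (πr : ℝ → Set (Set G))
    (hπr : ∀ r : ℝ, 0 < r → IsUniformPartition (πr r)
      (gball nm 1 (r / (4 * γ ^ 2)))
      (gball nm 1 (r / (4 * γ ^ 2)) * gball nm 1 (r / (4 * γ ^ 2))))
   (q p α : ℝ≥0∞) (hq1 : 1 ≤ q) (hp1 : 1 ≤ p) (hα1 : 1 ≤ α) :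
    (∀ f g : G → ℂ, AEStronglyMeasurable f μ → AEStronglyMeasurable g μ →
        alphaNorm μ nm πr q p α (f + g) ≤
          alphaNorm μ nm πr q p α f + alphaNorm μ nm πr q p α g) ∧
    (∀ (c : ℂ) (f : G → ℂ),
        alphaNorm μ nm πr q p α (c • f) = (‖c‖₊ : ℝ≥0∞) * alphaNorm μ nm πr q p α f) ∧
    (∀ f : G → ℂ, AEStronglyMeasurable f μ →
        (alphaNorm μ nm πr q p α f = 0 ↔ f =ᵐ[μ] 0)) ∧
    (∀ F : ℕ → G → ℂ, (∀ n, AEStronglyMeasurable (F n) μ) →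
      (∀ n, alphaNorm μ nm πr q p α (F n) < ∞) →
      (∀ ε : ℝ≥0∞, 0 < ε → ∃ N : ℕ, ∀ m n : ℕ, N ≤ m → N ≤ n →
        alphaNorm μ nm πr q p α (F m - F n) < ε) →
      ∃ f : G → ℂ, AEStronglyMeasurable f μ ∧ alphaNorm μ nm πr q p α f < ∞ ∧
        Tendsto (fun n => alphaNorm μ nm πr q p α (F n - f)) atTop (𝓝 0)) := by
  classical
  have hq0 : q ≠ 0 := (zero_lt_one.trans_le hq1).ne'
  have hmeas : ∀ r : ℝ, 0 < r → ∀ A ∈ πr r, MeasurableSet A := fun r hr => (hπr r hr).2.1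
  have hcnt1 : (πr 1).Countable := (hπr 1 one_pos).1
  have hcover1 : ⋃₀ (πr 1) = univ := (hπr 1 one_pos).2.2.2.1
  have htri : ∀ f g : G → ℂ, AEStronglyMeasurable f μ → AEStronglyMeasurable g μ →
      alphaNorm μ nm πr q p α (f + g) ≤
        alphaNorm μ nm πr q p α f + alphaNorm μ nm πr q p α g :=
    fun f g hf hg => alphaNorm_add_le μ nm πr q p α hq1 hp1 hmeas hf hg
  have hsmul : ∀ (c : ℂ) (f : G → ℂ),
      alphaNorm μ nm πr q p α (c • f) = (‖c‖₊ : ℝ≥0∞) * alphaNorm μ nm πr q p α f :=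
    fun c f => alphaNorm_smul μ nm πr q p α hp1 c f
  refine ⟨htri, hsmul, ?_, ?_⟩
  · -- definiteness
    intro f hf
    constructor
    · intro h0
      have hzero : ∀ A ∈ πr 1, eLpNorm (A.indicator f) q μ = 0 := fun A hA =>
        le_antisymm (((eLpNorm_le_partNorm hp1 hA f).trans
          (partNorm_one_le_alphaNorm μ nm πr q p α hvol f)).trans h0.le) (zero_le)
      have hae0 : ∀ᵐ x ∂μ, ∀ A ∈ πr 1, A.indicator f x = 0 := by
        rw [ae_ball_iff hcnt1]
        intro A hA
        have := (eLpNorm_eq_zero_iff (hf.indicator (hmeas 1 one_pos A hA)) hq0).1 (hzero A hA)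
        exact this.mono fun x hx => by simpa using hx
      refine hae0.mono fun x hx => ?_
      have hx' : x ∈ ⋃₀ πr 1 := by rw [hcover1]; trivial
      obtain ⟨A, hA, hxA⟩ := hx'
      have := hx A hA
      rw [Set.indicator_of_mem hxA] at this
      simpa using this
    · intro h0
      refine le_antisymm ?_ (zero_le)
      rw [alphaNorm]
      refine iSup₂_le fun r hr => ?_
      rw [partNorm_eq_zero_of hp1 ?_, mul_zero]
      intro A hA
      have hind : A.indicator f =ᵐ[μ] 0 := by
        refine h0.mono fun x hx => ?_
        have hx0 : f x = 0 := by simpa using hx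
        by_cases h : x ∈ A <;>
          simp [Set.indicator_of_mem, Set.indicator_of_notMem, h, hx0]
      rw [eLpNorm_congr_ae hind, eLpNorm_zero]
  · -- completeness
    intro F hF hFfin hcau
    choose N hN using fun k : ℕ =>
      hcau ((2 : ℝ≥0∞)⁻¹ ^ k) (ENNReal.pow_pos (ENNReal.inv_pos.2 ENNReal.ofNat_ne_top) k)
    let ns : ℕ → ℕ := fun k => Nat.rec (N 0) (fun k ih => max (ih + 1) (N (k + 1))) k
    have hns_succ : ∀ k, ns (k + 1) = max (ns k + 1) (N (k + 1)) := fun _ => rfl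
    have hnsmono : StrictMono ns := strictMono_nat_of_lt_succ fun k => by
      rw [hns_succ]; exact lt_of_lt_of_le (Nat.lt_succ_self _) (le_max_left _ _)
    have hNns : ∀ k, N k ≤ ns k := by
      intro k
      cases k with
      | zero => exact le_rfl
      | succ k => rw [hns_succ]; exact le_max_right _ _
    have hεsum : (∑' k : ℕ, (2 : ℝ≥0∞)⁻¹ ^ k) ≠ ∞ := by
      rw [ENNReal.tsum_geometric, ENNReal.one_sub_inv_two]
      simp
    have haeA : ∀ A ∈ πr 1, ∀ᵐ x ∂(μ.restrict A),
        ∃ l : ℂ, Tendsto (fun k => F (ns k) x) atTop (𝓝 l) := by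
      intro A hA
      refine Lp.ae_tendsto_of_cauchy_eLpNorm (f := fun k => F (ns k))
        (fun k => (hF (ns k)).restrict) hq1 hεsum ?_
      intro K j m hj hm
      calc eLpNorm ((fun k => F (ns k)) j - (fun k => F (ns k)) m) q (μ.restrict A)
          = eLpNorm (A.indicator (F (ns j) - F (ns m))) q μ :=
            (eLpNorm_indicator_eq_eLpNorm_restrict (hmeas 1 one_pos A hA)).symm
        _ ≤ partNorm μ q p (πr 1) (F (ns j) - F (ns m)) := eLpNorm_le_partNorm hp1 hA _
        _ ≤ alphaNorm μ nm πr q p α (F (ns j) - F (ns m)) :=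
            partNorm_one_le_alphaNorm μ nm πr q p α hvol _
        _ < (2 : ℝ≥0∞)⁻¹ ^ K :=
            hN K _ _ ((hNns K).trans (hnsmono.monotone hj))
              ((hNns K).trans (hnsmono.monotone hm))
    have hae : ∀ᵐ x ∂μ, ∃ l : ℂ, Tendsto (fun k => F (ns k) x) atTop (𝓝 l) := by
      rw [ae_iff]
      set S := {x : G | ¬ ∃ l : ℂ, Tendsto (fun k => F (ns k) x) atTop (𝓝 l)} with hS
      have hSsub : S ⊆ ⋃ A ∈ πr 1, S ∩ A := by
        intro x hx
        have hx' : x ∈ ⋃₀ πr 1 := by rw [hcover1]; trivial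
        obtain ⟨A, hA, hxA⟩ := hx'
        exact Set.mem_biUnion hA ⟨hx, hxA⟩
      refine measure_mono_null hSsub ?_
      refine (measure_biUnion_null_iff hcnt1).2 fun A hA => ?_
      have h1 := haeA A hA
      rw [ae_iff, Measure.restrict_apply' (hmeas 1 one_pos A hA)] at h1
      exact h1
    let f : G → ℂ := fun x =>
      if h : ∃ l : ℂ, Tendsto (fun k => F (ns k) x) atTop (𝓝 l) then h.choose else 0
    have hftend : ∀ᵐ x ∂μ, Tendsto (fun k => F (ns k) x) atTop (𝓝 (f x)) := by
      refine hae.mono fun x hx => ?_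
      show Tendsto _ _ (𝓝 (dite _ _ _))
      rw [dif_pos hx]
      exact hx.choose_spec
    have hfm : AEStronglyMeasurable f μ :=
      aestronglyMeasurable_of_tendsto_ae atTop (fun k => hF (ns k)) hftend
    have hdiff_le : ∀ (m : ℕ) (ε' : ℝ≥0∞) (N' : ℕ),
        (∀ j, N' ≤ j → alphaNorm μ nm πr q p α (F m - F (ns j)) < ε') →
        alphaNorm μ nm πr q p α (F m - f) ≤ ε' := by
      intro m ε' N' hbd
      have hlim : ∀ᵐ x ∂μ, Tendsto (fun k => (F m - F (ns k)) x) atTop (𝓝 ((F m - f) x)) := by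
        refine hftend.mono fun x hx => ?_
        simpa [Pi.sub_apply] using hx.const_sub (F m x)
      refine le_trans (alphaNorm_fatou μ nm πr q p α hp1 hmeas
        (fun k => (hF m).sub (hF (ns k))) hlim) ?_
      refine liminf_le_of_frequently_le' ?_
      exact ((eventually_ge_atTop N').mono fun k hk => (hbd k hk).le).frequently
    refine ⟨f, hfm, ?_, ?_⟩
    · obtain ⟨N1, hN1⟩ := hcau 1 zero_lt_one
      have h1 : alphaNorm μ nm πr q p α (F N1 - f) ≤ 1 :=
        hdiff_le N1 1 N1 fun j hj =>
          hN1 N1 (ns j) le_rfl (hj.trans (hnsmono.le_apply))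
      have hneg : alphaNorm μ nm πr q p α (f - F N1) ≤ 1 := by
        have heq : f - F N1 = (-1 : ℂ) • (F N1 - f) := by
          funext x; simp [neg_sub]
        rw [heq, hsmul]
        simpa using h1
      have hfe : F N1 + (f - F N1) = f := by funext x; simp
      calc alphaNorm μ nm πr q p α f
          = alphaNorm μ nm πr q p α (F N1 + (f - F N1)) := by rw [hfe]
        _ ≤ alphaNorm μ nm πr q p α (F N1) + alphaNorm μ nm πr q p α (f - F N1) :=
            htri _ _ (hF N1) (hfm.sub (hF N1))
        _ < ∞ := ENNReal.add_lt_top.2 ⟨hFfin N1, lt_of_le_of_lt hneg (by simp)⟩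
    · rw [ENNReal.tendsto_atTop_zero]
      intro ε hε
      obtain ⟨N0, hN0⟩ := hcau ε hε
      exact ⟨N0, fun m hm => hdiff_le m ε N0 fun j hj =>
        hN0 m (ns j) hm (hj.trans (hnsmono.le_apply))⟩
end

section
/- Let α, q, p ∈ [1,∞] with α < q. Then (L^q,L^p)^α(G) = {O}, where O is the class of functions equal to 0 λ-almost everywhere; that is, every measurable f with ‖f‖_{q,p,α} < ∞ vanishes λ-a.e. -/
open MeasureTheory ENNReal NNReal Set Filter Topology Pointwise

variable {G : Type*} [Group G] [TopologicalSpace G] [IsTopologicalGroup G]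
  [T2Space G] [LocallyCompactSpace G] [SigmaCompactSpace G]
  [MeasurableSpace G] [BorelSpace G]

theorem statement7
    (μ : Measure G) [μ.IsHaarMeasure]
    (nm : G → ℝ) (γ ρ : ℝ)
    (hnm_cont : Continuous nm)
    (hnm_nonneg : ∀ x : G, 0 ≤ nm x)
    (hnm_zero : ∀ x : G, nm x = 0 ↔ x = 1)
    (hnm_inv : ∀ x : G, nm x⁻¹ = nm x)
    (hγ : 1 ≤ γ)
    (hnm_mul : ∀ x y : G, nm (x * y) ≤ γ * (nm x + nm y))
    (hball_cpt : ∀ (x : G) (r : ℝ), 0 < r → IsCompact (closure (gball nm x r)))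
    (hρ : 0 < ρ)
    (hvol : ∀ r : ℝ, 0 < r → μ (gball nm 1 r) = ENNReal.ofReal (r ^ ρ))
    (πr : ℝ → Set (Set G))
    (hπr : ∀ r : ℝ, 0 < r → IsUniformPartition (πr r)
      (gball nm 1 (r / (4 * γ ^ 2)))
      (gball nm 1 (r / (4 * γ ^ 2)) * gball nm 1 (r / (4 * γ ^ 2))))
   (q p α : ℝ≥0∞) (hα1 : 1 ≤ α) (hp1 : 1 ≤ p) (hαq : α < q) :
    ∀ f : G → ℂ, AEStronglyMeasurable f μ →
      alphaNorm μ nm πr q p α f < ∞ → f =ᵐ[μ] 0 := by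
  
  intro f hf hfin
  by_contra hne
  obtain ⟨g, hg_sm, hfg⟩ := hf
  have hγ0 : (0:ℝ) < γ := lt_of_lt_of_le one_pos hγ
  have hball_open : ∀ (x : G) (s : ℝ), IsOpen (gball nm x s) := by
    intro x s
    have : gball nm x s = (fun y => nm (x⁻¹ * y)) ⁻¹' Iio s := rfl
    rw [this]
    exact isOpen_Iio.preimage (hnm_cont.comp (continuous_const.mul continuous_id))
  have hball_meas : ∀ (x : G) (s : ℝ), MeasurableSet (gball nm x s) :=
    fun x s => (hball_open x s).measurableSet
  have hmem_ball : ∀ (y : G) (s : ℝ), y ∈ gball nm 1 s ↔ nm y < s := by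
    intro y s; simp [gball]
  have hsmul_ball : ∀ (x : G) (s : ℝ), x • gball nm 1 s = gball nm x s := by
    intro x s; ext y
    simp [gball, mem_smul_set_iff_inv_smul_mem, smul_eq_mul]
  -- g is not a.e. zero
  have hgne : ¬ (g =ᵐ[μ] 0) := fun h => hne (hfg.trans h)
  have hgmeas : Measurable fun x => ‖g x‖ := hg_sm.norm.measurable
  have h0 : μ {x | g x ≠ 0} ≠ 0 := by
    intro h
    exact hgne (by simpa [Filter.EventuallyEq, ae_iff] using h)
  obtain ⟨n, hn⟩ : ∃ n : ℕ, μ {x | 1/((n:ℝ)+1) < ‖g x‖} ≠ 0 := by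
    by_contra hc; push_neg at hc
    apply h0
    have hsub : {x | g x ≠ 0} ⊆ ⋃ n : ℕ, {x | 1/((n:ℝ)+1) < ‖g x‖} := by
      intro x hx
      have hx0 : 0 < ‖g x‖ := norm_pos_iff.mpr hx
      obtain ⟨k, hk⟩ := exists_nat_one_div_lt hx0
      exact mem_iUnion.mpr ⟨k, hk⟩
    exact measure_mono_null hsub (measure_iUnion_null hc)
  set ε : ℝ := 1/((n:ℝ)+1) with hεdef
  have hε : 0 < ε := by positivity
  set T : Set G := {x | ε < ‖g x‖} with hTdef
  have hTmeas : MeasurableSet T := measurableSet_lt measurable_const hgmeas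
  obtain ⟨m, hm⟩ : ∃ m : ℕ, μ (T ∩ gball nm 1 ((m:ℝ)+1)) ≠ 0 := by
    by_contra hc; push_neg at hc
    apply hn
    have hsub : T ⊆ ⋃ m : ℕ, (T ∩ gball nm 1 ((m:ℝ)+1)) := by
      intro x hx
      obtain ⟨k, hk⟩ := exists_nat_gt (nm x)
      exact mem_iUnion.mpr ⟨k, hx, (hmem_ball x _).mpr (hk.trans (lt_add_one _))⟩
    exact measure_mono_null hsub (measure_iUnion_null hc)
  set R : ℝ := (m:ℝ)+1 with hRdef
  have hR0 : (0:ℝ) < R := by positivity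
  set K : Set G := T ∩ gball nm 1 R with hKdef
  have hKmeas : MeasurableSet K := hTmeas.inter (hball_meas _ _)
  have hK0 : μ K ≠ 0 := hm
  have hKtop : μ K ≠ ∞ := by
    have hle : μ K ≤ μ (closure (gball nm 1 R)) :=
      measure_mono (inter_subset_right.trans subset_closure)
    exact (lt_of_le_of_lt hle (hball_cpt 1 R hR0).measure_lt_top).ne
  -- constants
  set W : ℝ≥0∞ := ENNReal.ofReal ((8*γ^4) ^ ρ) with hWdef
  have hW0 : W ≠ 0 := (ENNReal.ofReal_pos.mpr (Real.rpow_pos_of_pos (by positivity) ρ)).ne'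
  have hWtop : W ≠ ∞ := ofReal_ne_top
  set c₀ : ℝ≥0∞ := μ K * W⁻¹ / 2 with hc₀def
  have hc₀0 : c₀ ≠ 0 := by
    refine (ENNReal.div_pos (mul_ne_zero hK0 (ENNReal.inv_ne_zero.mpr hWtop)) ENNReal.ofNat_ne_top).ne'
  have hc₀top : c₀ ≠ ∞ := by
    refine (ENNReal.div_lt_top (ENNReal.mul_ne_top hKtop (ENNReal.inv_ne_top.mpr hW0)) two_ne_zero).ne
  set θ : ℝ := q⁻¹.toReal with hθdef
  have hθ : 0 ≤ θ := ENNReal.toReal_nonneg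
  set δ : ℝ := α⁻¹.toReal - θ with hδdef
  have hq0 : q ≠ 0 := (lt_of_le_of_lt (zero_le : 0 ≤ α) hαq).ne'
  have hα0 : α ≠ 0 := (lt_of_lt_of_le zero_lt_one hα1).ne'
  have hδpos : 0 < δ := by
    have hinvlt : q⁻¹ < α⁻¹ := ENNReal.inv_lt_inv.mpr hαq
    have hαinvtop : α⁻¹ ≠ ∞ := ENNReal.inv_ne_top.mpr hα0
    exact sub_pos.mpr (ENNReal.toReal_strict_mono hαinvtop hinvlt)
  set κ : ℝ≥0∞ := ENNReal.ofReal ε * c₀ ^ θ with hκdef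
  have hκ0 : κ ≠ 0 :=
    mul_ne_zero (ENNReal.ofReal_pos.mpr hε).ne'
      (ENNReal.rpow_pos (pos_iff_ne_zero.mpr hc₀0) hc₀top).ne'
  have hκtop : κ ≠ ∞ :=
    ENNReal.mul_ne_top ofReal_ne_top (ENNReal.rpow_ne_top_of_nonneg hθ hc₀top)
  -- key estimate
  have key : ∀ r : ℝ, max R 1 ≤ r →
      ENNReal.ofReal (r ^ ρ) ^ δ * κ ≤ alphaNorm μ nm πr q p α f := by
    intro r hr
    have hr1 : (1:ℝ) ≤ r := le_trans (le_max_right _ _) hr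
    have hRr : R ≤ r := le_trans (le_max_left _ _) hr
    have hr0 : (0:ℝ) < r := lt_of_lt_of_le one_pos hr1
    set t : ℝ := r / (4*γ^2) with htdef
    have ht0 : (0:ℝ) < t := by positivity
    obtain ⟨hπcnt, hπmeas, hπdisj, hπcover, hπpts⟩ := hπr r hr0
    choose! xA hxA₁ hxA₂ hxA₃ using hπpts
    set U : Set G := gball nm 1 t with hUdef
    set Bbig : Set G := gball nm 1 (2*γ^2*r) with hBdef
    have hvolU : μ U = ENNReal.ofReal (t ^ ρ) := hvol t ht0
    have hvU0 : μ U ≠ 0 := by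
      rw [hvolU]; exact (ENNReal.ofReal_pos.mpr (Real.rpow_pos_of_pos ht0 ρ)).ne'
    have hvUtop : μ U ≠ ∞ := by rw [hvolU]; exact ofReal_ne_top
    -- geometry
    have hgeom : ∀ A ∈ πr r, (A ∩ K : Set G).Nonempty → xA A • U ⊆ Bbig := by
      intro A hA hne y hy
      obtain ⟨k, hkA, hkK⟩ := hne
      set x : G := xA A with hxdef
      have hy' : nm (x⁻¹ * y) < t := by
        have h := mem_smul_set_iff_inv_smul_mem.mp hy
        rw [hUdef] at h
        simpa [gball, smul_eq_mul] using h
      have hkx : k ∈ x • (gball nm 1 t * gball nm 1 t) := hxA₃ A hA hkA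
      have hk' : x⁻¹ * k ∈ gball nm 1 t * gball nm 1 t := by
        have := mem_smul_set_iff_inv_smul_mem.mp hkx
        simpa [smul_eq_mul] using this
      obtain ⟨u, hu, v, hv, huv⟩ := hk'
      have hu' : nm u < t := (hmem_ball u t).mp hu
      have hv' : nm v < t := (hmem_ball v t).mp hv
      have hxk : nm (x⁻¹ * k) ≤ γ * (nm u + nm v) := by
        rw [← huv]; exact hnm_mul u v
      have hkx' : nm (k⁻¹ * x) = nm (x⁻¹ * k) := by
        rw [show x⁻¹ * k = (k⁻¹ * x)⁻¹ by group, hnm_inv]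
      have h2 : nm (k⁻¹ * y) ≤ γ * (nm (k⁻¹ * x) + nm (x⁻¹ * y)) := by
        have := hnm_mul (k⁻¹ * x) (x⁻¹ * y)
        rwa [show (k⁻¹ * x) * (x⁻¹ * y) = k⁻¹ * y by group] at this
      have h1 : nm y ≤ γ * (nm k + nm (k⁻¹ * y)) := by
        have := hnm_mul k (k⁻¹ * y)
        rwa [mul_inv_cancel_left] at this
      have hkR : nm k < R := (hmem_ball k R).mp hkK.2
      have ht' : t * (4*γ^2) = r := by
        rw [htdef]; field_simp
      have hxk2 : nm (x⁻¹ * k) ≤ 2*γ*t :=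
        calc nm (x⁻¹ * k) ≤ γ * (nm u + nm v) := hxk
          _ ≤ γ * (t + t) := mul_le_mul_of_nonneg_left (by linarith) hγ0.le
          _ = 2*γ*t := by ring
      have h2' : nm (k⁻¹ * y) ≤ γ * (2*γ*t + t) :=
        calc nm (k⁻¹ * y) ≤ γ * (nm (k⁻¹ * x) + nm (x⁻¹ * y)) := h2
          _ ≤ γ * (2*γ*t + t) := by
              refine mul_le_mul_of_nonneg_left ?_ hγ0.le
              rw [hkx']; linarith
      have h1' : nm y ≤ γ * (R + γ * (2*γ*t + t)) :=
        calc nm y ≤ γ * (nm k + nm (k⁻¹ * y)) := h1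
          _ ≤ γ * (R + γ * (2*γ*t + t)) := by
              refine mul_le_mul_of_nonneg_left ?_ hγ0.le
              linarith
      have hR4 : R ≤ 4*γ^2*t := by linarith [hRr, ht']
      have hstep : γ * (R + γ * (2*γ*t + t)) < 2*γ^2*r := by
        have h8 : 6*γ^3*t + γ^2*t < 8*γ^4*t := by
          nlinarith [mul_pos ht0 (mul_pos hγ0 hγ0),
            mul_nonneg (mul_nonneg ht0.le (sq_nonneg γ)) (sub_nonneg.mpr hγ),
            mul_nonneg (mul_nonneg ht0.le (sq_nonneg γ)) (sq_nonneg (γ-1))]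
        calc γ * (R + γ * (2*γ*t + t)) ≤ γ * (4*γ^2*t + γ * (2*γ*t + t)) := by
              refine mul_le_mul_of_nonneg_left ?_ hγ0.le
              linarith
          _ = 6*γ^3*t + γ^2*t := by ring
          _ < 8*γ^4*t := h8
          _ = 2*γ^2*r := by rw [← ht']; ring
      rw [hBdef, hmem_ball]
      exact lt_of_le_of_lt h1' hstep
    have hinv : ∀ x : G, μ (x • U) = μ U := fun x => measure_smul μ x U
    -- there is a heavy piece
    have hheavy : ∃ A ∈ πr r, c₀ ≤ μ (A ∩ K) := by
      by_contra hc; push_neg at hc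
      have hUK : (⋃ b ∈ πr r, b ∩ K) = K := by
        rw [← iUnion₂_inter, ← sUnion_eq_biUnion, hπcover, univ_inter]
      have hKeq : μ K = ∑' A : πr r, μ ((A : Set G) ∩ K) := by
        conv_lhs => rw [← hUK]
        exact measure_biUnion (f := fun b => b ∩ K) hπcnt
          (fun A hA B hB hAB => (hπdisj hA hB hAB).mono inter_subset_left inter_subset_left)
          (fun A hA => (hπmeas A hA).inter hKmeas)
      have hterm : ∀ A ∈ πr r,
          μ ((A : Set G) ∩ K) ≤ (c₀ / μ U) * μ ((xA A • U) ∩ Bbig) := by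
        intro A hA
        by_cases hz : μ ((A : Set G) ∩ K) = 0
        · rw [hz]; exact zero_le
        · have hnonempty : ((A : Set G) ∩ K).Nonempty := nonempty_of_measure_ne_zero hz
          have hsub : xA A • U ⊆ Bbig := hgeom A hA hnonempty
          rw [inter_eq_left.mpr hsub, hinv, ENNReal.div_mul_cancel hvU0 hvUtop]
          exact (hc A hA).le
      have hBvol : μ Bbig = ENNReal.ofReal ((2*γ^2*r) ^ ρ) := hvol _ (by positivity)
      have hdisj2 : (πr r).PairwiseDisjoint (fun A => (xA A • U) ∩ Bbig) := by
        intro A hA B hB hAB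
        exact (hπdisj hA hB hAB).mono (inter_subset_left.trans (hxA₂ A hA))
          (inter_subset_left.trans (hxA₂ B hB))
      have hmeas2 : ∀ A ∈ πr r, MeasurableSet ((xA A • U) ∩ Bbig) := by
        intro A hA
        rw [hUdef, hsmul_ball]
        exact (hball_meas _ _).inter (hball_meas _ _)
      have hsum : ∑' A : πr r, μ ((xA (A : Set G) • U) ∩ Bbig) ≤ μ Bbig := by
        rw [← measure_biUnion hπcnt hdisj2 hmeas2]
        exact measure_mono (iUnion₂_subset fun A hA => inter_subset_right)
      have hchain : μ K ≤ (c₀ / μ U) * μ Bbig := by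
        calc μ K = ∑' A : πr r, μ ((A : Set G) ∩ K) := hKeq
          _ ≤ ∑' A : πr r, (c₀ / μ U) * μ ((xA (A : Set G) • U) ∩ Bbig) :=
            ENNReal.tsum_le_tsum fun A => hterm A A.2
          _ = (c₀ / μ U) * ∑' A : πr r, μ ((xA (A : Set G) • U) ∩ Bbig) :=
            ENNReal.tsum_mul_left
          _ ≤ (c₀ / μ U) * μ Bbig := mul_le_mul' le_rfl hsum
      have hBW : μ Bbig = μ U * W := by
        rw [hBvol, hvolU, hWdef, ← ENNReal.ofReal_mul (Real.rpow_nonneg ht0.le ρ),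
          ← Real.mul_rpow ht0.le (by positivity)]
        congr 2
        rw [htdef]; field_simp; ring
      have hfinal : μ K ≤ μ K / 2 := by
        calc μ K ≤ (c₀ / μ U) * μ Bbig := hchain
          _ = c₀ * W := by
            rw [hBW, ← mul_assoc, ENNReal.div_mul_cancel hvU0 hvUtop]
          _ = μ K / 2 := by
            rw [hc₀def, div_eq_mul_inv, div_eq_mul_inv,
              mul_right_comm (μ K) W⁻¹ 2⁻¹, mul_assoc,
              ENNReal.inv_mul_cancel hW0 hWtop, mul_one]
      exact absurd hfinal (not_le.mpr (ENNReal.half_lt_self hK0 hKtop))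
    obtain ⟨A, hA, hAK⟩ := hheavy
    have hAK0 : μ ((A : Set G) ∩ K) ≠ 0 :=
      (lt_of_lt_of_le (pos_iff_ne_zero.mpr hc₀0) hAK).ne'
    have hAmeas : MeasurableSet ((A : Set G) ∩ K) := (hπmeas A hA).inter hKmeas
    -- lower bound for eLpNorm on the heavy piece
    have hlow : κ ≤ eLpNorm (A.indicator f) q μ := by
      have hind : A.indicator f =ᵐ[μ] A.indicator g := by
        filter_upwards [hfg] with x hx
        by_cases h : x ∈ A
        · simp only [Set.indicator_of_mem h, hx]
        · simp only [Set.indicator_of_notMem h]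
      rw [eLpNorm_congr_ae hind]
      have hmono : eLpNorm (((A : Set G) ∩ K).indicator (fun _ => (ε:ℂ))) q μ ≤
          eLpNorm (A.indicator g) q μ := by
        refine eLpNorm_mono fun x => ?_
        by_cases h1 : x ∈ (A : Set G) ∩ K
        · rw [indicator_of_mem h1, indicator_of_mem h1.1]
          have : ε < ‖g x‖ := h1.2.1
          calc ‖(ε:ℂ)‖ = ε := by rw [Complex.norm_real, Real.norm_eq_abs, abs_of_pos hε]
            _ ≤ ‖g x‖ := this.le
        · rw [indicator_of_notMem h1]; simp
      refine le_trans ?_ hmono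
      have hεnorm : ‖(ε:ℂ)‖ₑ = ENNReal.ofReal ε := by
        rw [← ofReal_norm_eq_enorm, Complex.norm_real, Real.norm_of_nonneg hε.le]
      by_cases hqtop : q = ∞
      · have hθ0 : θ = 0 := by simp [hθdef, hqtop]
        rw [hqtop, eLpNorm_exponent_top,
          eLpNormEssSup_indicator_const_eq _ _ hAK0, hεnorm, hκdef, hθ0,
          ENNReal.rpow_zero, mul_one]
      · rw [eLpNorm_indicator_const hAmeas hq0 hqtop, hεnorm]
        have hθeq : θ = 1 / q.toReal := by
          rw [hθdef, ENNReal.toReal_inv, one_div]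
        rw [hκdef, hθeq]
        exact mul_le_mul' le_rfl (ENNReal.rpow_le_rpow hAK (by positivity))
    -- partNorm dominates a single piece
    have hpart : eLpNorm (A.indicator f) q μ ≤ partNorm μ q p (πr r) f := by
      by_cases hptop : p = ∞
      · rw [partNorm, if_pos hptop]
        exact le_iSup₂ (f := fun (B : Set G) (_ : B ∈ πr r) => eLpNorm (B.indicator f) q μ) A hA
      · rw [partNorm, if_neg hptop]
        have hpt : 0 < p.toReal :=
          ENNReal.toReal_pos (lt_of_lt_of_le zero_lt_one hp1).ne' hptop
        have h1 : eLpNorm (A.indicator f) q μ ^ p.toReal ≤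
            ∑' B : πr r, eLpNorm ((B : Set G).indicator f) q μ ^ p.toReal :=
          ENNReal.le_tsum (⟨A, hA⟩ : πr r)
        calc eLpNorm (A.indicator f) q μ
            = (eLpNorm (A.indicator f) q μ ^ p.toReal) ^ (1 / p.toReal) := by
              rw [← ENNReal.rpow_mul, mul_one_div, div_self hpt.ne', ENNReal.rpow_one]
          _ ≤ (∑' B : πr r, eLpNorm ((B : Set G).indicator f) q μ ^ p.toReal) ^ (1 / p.toReal) :=
              ENNReal.rpow_le_rpow h1 (by positivity)
    -- combine
    have hexpr : μ (gball nm 1 r) ^ (α⁻¹.toReal - q⁻¹.toReal) * partNorm μ q p (πr r) f ≤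
        alphaNorm μ nm πr q p α f :=
      le_iSup₂ (f := fun (s : ℝ) (_ : 0 < s) =>
        μ (gball nm 1 s) ^ (α⁻¹.toReal - q⁻¹.toReal) * partNorm μ q p (πr s) f) r hr0
    calc ENNReal.ofReal (r ^ ρ) ^ δ * κ
        ≤ μ (gball nm 1 r) ^ (α⁻¹.toReal - q⁻¹.toReal) * partNorm μ q p (πr r) f := by
          rw [hvol r hr0]
          exact mul_le_mul' le_rfl (hlow.trans hpart)
      _ ≤ alphaNorm μ nm πr q p α f := hexpr
  -- final contradiction
  set C : ℝ≥0∞ := alphaNorm μ nm πr q p α f with hCdef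
  have hCtop : C ≠ ∞ := hfin.ne
  have hCκtop : C / κ ≠ ∞ := (ENNReal.div_lt_top hCtop hκ0).ne
  set D : ℝ := (C / κ).toReal with hDdef
  have hD0 : 0 ≤ D := ENNReal.toReal_nonneg
  have hρδ : 0 < ρ * δ := mul_pos hρ hδpos
  set r : ℝ := max (max R 1) ((D+1) ^ (1/(ρ*δ))) with hrdef
  have hr0 : (0:ℝ) < r :=
    lt_of_lt_of_le one_pos ((le_max_right R 1).trans (le_max_left _ _))
  have h1 : ENNReal.ofReal (r ^ ρ) ^ δ ≤ C / κ :=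
    (ENNReal.le_div_iff_mul_le (Or.inl hκ0) (Or.inl hκtop)).mpr (key r (le_max_left _ _))
  have h2 : ENNReal.ofReal (r ^ ρ) ^ δ = ENNReal.ofReal (r ^ (ρ*δ)) := by
    rw [ENNReal.ofReal_rpow_of_pos (Real.rpow_pos_of_pos hr0 ρ), ← Real.rpow_mul hr0.le]
  have h3 : D + 1 ≤ r ^ (ρ*δ) := by
    have hle : (D+1) ^ (1/(ρ*δ)) ≤ r := le_max_right _ _
    calc D + 1 = ((D+1) ^ (1/(ρ*δ))) ^ (ρ*δ) := by
          rw [← Real.rpow_mul (by positivity), one_div, inv_mul_cancel₀ hρδ.ne', Real.rpow_one]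
      _ ≤ r ^ (ρ*δ) := Real.rpow_le_rpow (by positivity) hle hρδ.le
  have h4 : C / κ < ENNReal.ofReal (r ^ (ρ*δ)) := by
    calc C / κ = ENNReal.ofReal D := (ENNReal.ofReal_toReal hCκtop).symm
      _ < ENNReal.ofReal (D+1) := by
          rw [ENNReal.ofReal_lt_ofReal_iff (by positivity)]; linarith
      _ ≤ ENNReal.ofReal (r ^ (ρ*δ)) := ENNReal.ofReal_le_ofReal h3
  rw [h2] at h1
  exact absurd h1 (not_le.mpr h4)
end

section
/- Let 1 ≤ p < θ < ∞ and 1 ≤ q ≤ ∞, with θ', p', q' the conjugate exponents. Define g(x) = (γ + γ|x|)^{−ρ/θ'} for x ∈ G, and k(θ;p;a) = ‖(|·|^{−ρ/θ'})·χ_{G∖B(e,a)}‖_{p'}. Then for every ε ∈ (0, 2γ) and every r ∈ (0, ε/(2γ)): _{B(e,r)}‖g·χ_{G∖B(e,ε)}‖_{q',p'} ≤ k(θ;p;ε/(2γ)) · λ(B(e,r))^{1/q'}. -/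
open MeasureTheory ENNReal NNReal Set Filter Topology Pointwise

variable {G : Type*} [Group G] [TopologicalSpace G] [IsTopologicalGroup G]
  [T2Space G] [LocallyCompactSpace G] [SigmaCompactSpace G]
  [MeasurableSpace G] [BorelSpace G]

theorem statement9
    (μ : Measure G) [μ.IsHaarMeasure]
    (nm : G → ℝ) (γ ρ : ℝ)
    (hnm_cont : Continuous nm)
    (hnm_nonneg : ∀ x : G, 0 ≤ nm x)
    (hnm_zero : ∀ x : G, nm x = 0 ↔ x = 1)
    (hnm_inv : ∀ x : G, nm x⁻¹ = nm x)
    (hγ : 1 ≤ γ)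
    (hnm_mul : ∀ x y : G, nm (x * y) ≤ γ * (nm x + nm y))
    (hball_cpt : ∀ (x : G) (r : ℝ), 0 < r → IsCompact (closure (gball nm x r)))
    (hρ : 0 < ρ)
    (hvol : ∀ r : ℝ, 0 < r → μ (gball nm 1 r) = ENNReal.ofReal (r ^ ρ))
   (p θ θ' : ℝ) (hp1 : 1 ≤ p) (hpθ : p < θ) (hθ' : θ' = θ / (θ - 1))
    (p' : ℝ≥0∞) (hp' : 1 / ENNReal.ofReal p + 1 / p' = 1)
    (q q' : ℝ≥0∞) (hq1 : 1 ≤ q) (hq' : 1 / q + 1 / q' = 1) :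
    ∀ ε : ℝ, 0 < ε → ε < 2 * γ → ∀ r : ℝ, 0 < r → r < ε / (2 * γ) →
      blockNorm μ q' p' (gball nm 1 r)
          (((gball nm 1 ε)ᶜ).indicator fun x => (γ + γ * nm x) ^ (-(ρ / θ'))) ≤
        eLpNorm (((gball nm 1 (ε / (2 * γ)))ᶜ).indicator fun y => nm y ^ (-(ρ / θ'))) p' μ *
          μ (gball nm 1 r) ^ q'⁻¹.toReal := by
  intro ε hε hε2 r hr hra
  have hγ0 : (0:ℝ) < γ := lt_of_lt_of_le one_pos hγ
  set a : ℝ := ε / (2 * γ) with ha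
  have ha0 : 0 < a := div_pos hε (by linarith)
  have ha1 : a < 1 := (div_lt_one (by linarith)).2 hε2
  have hθ1 : 1 < θ := lt_of_le_of_lt hp1 hpθ
  have hθ'0 : 0 < θ' := by rw [hθ']; exact div_pos (by linarith) (by linarith)
  have hs : 0 < ρ / θ' := div_pos hρ hθ'0
  set B : Set G := gball nm 1 r with hB
  set f : G → ℝ := ((gball nm 1 ε)ᶜ).indicator fun x => (γ + γ * nm x) ^ (-(ρ / θ')) with hf
  set c : G → ℝ := ((gball nm 1 a)ᶜ).indicator fun y => nm y ^ (-(ρ / θ')) with hc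
  set M : ℝ≥0∞ := μ B ^ q'⁻¹.toReal with hM
  have hμB : μ B = ENNReal.ofReal (r ^ ρ) := hvol r hr
  have hμBt : μ B ≠ ∞ := by rw [hμB]; exact ENNReal.ofReal_ne_top
  have key : ∀ y : G, eLpNorm ((y • B).indicator f) q' μ ≤ (‖c y‖₊ : ℝ≥0∞) * M := by
    intro y
    have hmono : ∀ x, ‖((y • B).indicator f) x‖ ≤
        ‖((y • B).indicator fun _ => c y) x‖ := by
      intro x
      by_cases hx : x ∈ y • B
      · rw [Set.indicator_of_mem hx, Set.indicator_of_mem hx]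
        by_cases hx' : x ∈ (gball nm 1 ε)ᶜ
        · have hxε : ε ≤ nm x := by
            have := hx'
            simp only [gball, Set.mem_compl_iff, Set.mem_setOf_eq, inv_one, one_mul,
              not_lt] at this
            exact this
          have hyx : nm (y⁻¹ * x) < r := by
            rw [Set.mem_smul_set_iff_inv_smul_mem] at hx
            simpa [hB, gball, smul_eq_mul] using hx
          have hyx0 : 0 ≤ nm (y⁻¹ * x) := hnm_nonneg _
          have hxle : nm x ≤ γ * (nm y + nm (y⁻¹ * x)) := by
            have := hnm_mul y (y⁻¹ * x)
            simpa using this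
          have hay : a < nm y := by
            have hga : γ * a = ε / 2 := by rw [ha]; field_simp
            nlinarith [hnm_nonneg y]
          have hyc : y ∈ (gball nm 1 a)ᶜ := by
            simp only [gball, Set.mem_compl_iff, Set.mem_setOf_eq, inv_one, one_mul, not_lt]
            exact hay.le
          have hyle : nm y ≤ γ + γ * nm x := by
            have h1 : nm y ≤ γ * (nm x + nm (x⁻¹ * y)) := by
              have := hnm_mul x (x⁻¹ * y); simpa using this
            have h2 : nm (x⁻¹ * y) = nm (y⁻¹ * x) := by
              rw [← hnm_inv (x⁻¹ * y)]; congr 1; group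
            nlinarith
          have hfx : f x = (γ + γ * nm x) ^ (-(ρ / θ')) := by
            rw [hf, Set.indicator_of_mem hx']
          have hcy : c y = nm y ^ (-(ρ / θ')) := by
            rw [hc, Set.indicator_of_mem hyc]
          have hbnd : (γ + γ * nm x) ^ (-(ρ / θ')) ≤ nm y ^ (-(ρ / θ')) :=
            Real.rpow_le_rpow_of_nonpos (lt_trans ha0 hay) hyle (neg_nonpos.2 hs.le)
          rw [hfx, hcy, Real.norm_eq_abs, Real.norm_eq_abs,
            abs_of_nonneg (Real.rpow_nonneg (by nlinarith [hnm_nonneg x]) _),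
            abs_of_nonneg (Real.rpow_nonneg (hnm_nonneg y) _)]
          exact hbnd
        · have : f x = 0 := by rw [hf, Set.indicator_of_notMem hx']
          rw [this]; simp
      · rw [Set.indicator_of_notMem hx, Set.indicator_of_notMem hx]
    calc eLpNorm ((y • B).indicator f) q' μ
        ≤ eLpNorm ((y • B).indicator fun _ => c y) q' μ := eLpNorm_mono hmono
      _ ≤ (‖c y‖₊ : ℝ≥0∞) * μ (y • B) ^ (1 / q'.toReal) := eLpNorm_indicator_const_le _ _
      _ = (‖c y‖₊ : ℝ≥0∞) * M := by
          rw [measure_smul, hM, one_div, ← ENNReal.toReal_inv]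
  have hp'0 : p' ≠ 0 := by
    intro h; rw [h] at hp'; simp at hp'
  have hcnorm : eLpNorm c p' μ = eLpNorm
      (((gball nm 1 (ε / (2 * γ)))ᶜ).indicator fun y => nm y ^ (-(ρ / θ'))) p' μ := by
    rw [hc, ha]
  rw [← hcnorm]
  by_cases hpt : p' = ∞
  · rw [blockNorm, if_pos hpt, hpt]
    have h1 : essSup (fun y => eLpNorm ((y • B).indicator f) q' μ) μ ≤
        essSup (fun y => (‖c y‖₊ : ℝ≥0∞) * M) μ :=
      essSup_mono_ae (Filter.Eventually.of_forall key)
    refine h1.trans ?_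
    have h2 : (fun y => (‖c y‖₊ : ℝ≥0∞) * M) ≤ᵐ[μ]
        fun _ => essSup (fun y => (‖c y‖₊ : ℝ≥0∞)) μ * M := by
      filter_upwards [ae_le_essSup (fun y => (‖c y‖₊ : ℝ≥0∞))] with y hy
      exact mul_le_mul_left hy M
    have hμ0 : μ ≠ 0 := by
      intro h
      have := hμB
      rw [h] at this
      simp only [Measure.coe_zero, Pi.zero_apply] at this
      have : (0:ℝ≥0∞) = ENNReal.ofReal (r ^ ρ) := this
      rw [eq_comm, ENNReal.ofReal_eq_zero] at this
      nlinarith [Real.rpow_pos_of_pos hr ρ, Real.rpow_natCast r 0]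
    refine (essSup_mono_ae h2).trans ?_
    rw [essSup_const _ hμ0, eLpNorm_exponent_top, eLpNormEssSup]
    rfl
  · rw [blockNorm, if_neg hpt]
    have hpt0 : 0 < p'.toReal := ENNReal.toReal_pos hp'0 hpt
    have hMt : M ^ p'.toReal ≠ ∞ :=
      ENNReal.rpow_ne_top_of_nonneg hpt0.le
        (ENNReal.rpow_ne_top_of_nonneg (by positivity) hμBt)
    calc (∫⁻ y, eLpNorm ((y • B).indicator f) q' μ ^ p'.toReal ∂μ) ^ (1 / p'.toReal)
        ≤ (∫⁻ y, ((‖c y‖₊ : ℝ≥0∞) * M) ^ p'.toReal ∂μ) ^ (1 / p'.toReal) := by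
          refine ENNReal.rpow_le_rpow ?_ (by positivity)
          exact lintegral_mono fun y => ENNReal.rpow_le_rpow (key y) hpt0.le
      _ = ((∫⁻ y, (‖c y‖₊ : ℝ≥0∞) ^ p'.toReal ∂μ) * M ^ p'.toReal) ^ (1 / p'.toReal) := by
          congr 1
          simp_rw [ENNReal.mul_rpow_of_nonneg _ _ hpt0.le]
          exact lintegral_mul_const' _ _ hMt
      _ = (∫⁻ y, (‖c y‖₊ : ℝ≥0∞) ^ p'.toReal ∂μ) ^ (1 / p'.toReal) * M := by
          rw [ENNReal.mul_rpow_of_nonneg _ _ (by positivity), ← ENNReal.rpow_mul,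
            mul_one_div, div_self hpt0.ne', ENNReal.rpow_one]
      _ = eLpNorm c p' μ * M := by
          rw [eLpNorm_eq_lintegral_rpow_enorm_toReal hp'0 hpt]
          rfl
end
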